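/- arXiv:0905.0298 — 3 statements merged into one kernel-verified Lean document; each statement's English description precedes it below -/
import Mathlib

section
/- Let m ≥ 3 and let P be a finite set of complex numbers with |P| = k ≥ 3 having no m points on a line. Then there exists a finite set A ⊆ ℂ with exactly k² − k + 1 points, having no m points on a line, such that S_P(A) ≥ 2k − 1. -/
open MeasureTheory

noncomputable section

/-- `Q` is a similar copy of `P`: the image of `P` under an
orientation-preserving similarity `p ↦ z·p + w`, `z ≠ 0`. -/
def SimilarCopy (P Q : Finset ℂ) : Prop :=
  ∃ z w : ℂ, z ≠ 0 ∧ (Q : Set ℂ) = (fun p => z * p + w) '' (P : Set ℂ)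

/-- `SP P Q` is the number of subsets of `Q` that are similar copies of `P`. -/
def SP (P Q : Finset ℂ) : ℕ :=
  letI := Classical.decPred (SimilarCopy P)
  (Q.powerset.filter (SimilarCopy P)).card

/-- `Q` has no `m` points on a line: every collinear subset has at most `m - 1` points. -/
def NoMOnLine (m : ℕ) (Q : Finset ℂ) : Prop :=
  ∀ S ⊆ Q, Collinear ℝ (S : Set ℂ) → S.card ≤ m - 1

/-- `Q` has `m` points on a line. -/
def HasMOnLine (m : ℕ) (Q : Finset ℂ) : Prop :=
  ∃ S ⊆ Q, S.card = m ∧ Collinear ℝ (S : Set ℂ)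

/-- The number of orientation-preserving isometries of `ℂ` mapping `P` onto itself,
i.e. maps `p ↦ u·p + w` with `|u| = 1` fixing `P` setwise. -/
def IsoPlusCard (P : Finset ℂ) : ℕ :=
  {uw : ℂ × ℂ | ‖uw.1‖ = 1 ∧
    (fun p => uw.1 * p + uw.2) '' (P : Set ℂ) = (P : Set ℂ)}.ncard

/-- The index of `A` with respect to the pattern `P`. -/
def indexP (P A : Finset ℂ) : ℝ :=
  Real.log ((IsoPlusCard P : ℝ) * SP P A + A.card) / Real.log A.card

/-- `SPnm P n m` : the maximum of `SP P Q` over `n`-point sets `Q`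
with no `m` points on a line. -/
def SPnm (P : Finset ℂ) (n m : ℕ) : ℕ :=
  sSup {k | ∃ Q : Finset ℂ, Q.card = n ∧ NoMOnLine m Q ∧ SP P Q = k}

/-- `SPn P n` : the maximum of `SP P Q` over all `n`-point sets `Q`. -/
def SPn (P : Finset ℂ) (n : ℕ) : ℕ :=
  sSup {k | ∃ Q : Finset ℂ, Q.card = n ∧ SP P Q = k}

/-- The Minkowski sum `B + C` of two finite sets of complex numbers. -/
def minkSum (B C : Finset ℂ) : Finset ℂ :=
  letI := Classical.decEq ℂ
  Finset.image₂ (· + ·) B C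

/-- `Q` contains four pairwise distinct points forming a parallelogram. -/
def HasParallelogram (Q : Finset ℂ) : Prop :=
  ∃ p₁ ∈ Q, ∃ p₂ ∈ Q, ∃ p₃ ∈ Q, ∃ p₄ ∈ Q,
    p₁ ≠ p₂ ∧ p₁ ≠ p₃ ∧ p₁ ≠ p₄ ∧ p₂ ≠ p₃ ∧ p₂ ≠ p₄ ∧ p₃ ≠ p₄ ∧
    p₂ - p₁ = p₄ - p₃

/-- `Q` is parallelogram-free: no 3 collinear points and no parallelogram. -/
def ParallelogramFree (Q : Finset ℂ) : Prop :=
  (∀ S ⊆ Q, Collinear ℝ (S : Set ℂ) → S.card ≤ 2) ∧ ¬ HasParallelogram Q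

/-- The set `Q(P, A, u, v) = ⋃_{p ∈ P} (u·p + (v·p − p + 1)·A)`. -/
def Qset (P A : Finset ℂ) (u v : ℂ) : Finset ℂ :=
  letI := Classical.decEq ℂ
  P.biUnion fun p => A.image fun a => u * p + (v * p - p + 1) * a

/-- The vertex set of the regular `k`-gon. -/
def Rpoly (k : ℕ) : Finset ℂ :=
  letI := Classical.decEq ℂ
  (Finset.range k).image fun j : ℕ => Complex.exp (2 * Real.pi * Complex.I * (j : ℂ) / (k : ℂ))

/-- `ω = e^{2πi/3}`. -/
def omega3 : ℂ := Complex.exp (2 * Real.pi * Complex.I / 3)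

/-- The vertex set `{1, ω, ω²}` of an equilateral triangle. -/
def triEq : Finset ℂ :=
  letI := Classical.decEq ℂ
  {1, omega3, omega3 ^ 2}

lemma im_of_real_mul (x : ℂ) (r : ℝ) : (x * (r:ℂ)).im = x.im * r := by
  simp [Complex.mul_im]

lemma ofReal_mul_im' (r : ℝ) (w : ℂ) : ((r:ℂ) * w).im = r * w.im := by
  simp [Complex.mul_im]

lemma collinear_iff_im (s : Set ℂ) :
    Collinear ℝ s ↔ ∀ a ∈ s, ∀ b ∈ s, ∀ c ∈ s,
      ((b - a) * (starRingEnd ℂ) (c - a)).im = 0 := by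
  constructor
  · intro h a ha b hb c hc
    obtain ⟨p₀, v, hv⟩ := (collinear_iff_exists_forall_eq_smul_vadd s).mp h
    obtain ⟨ra, hra⟩ := hv a ha
    obtain ⟨rb, hrb⟩ := hv b hb
    obtain ⟨rc, hrc⟩ := hv c hc
    have hb' : b - a = ((rb - ra : ℝ) : ℂ) * v := by
      rw [hra, hrb, vadd_eq_add, vadd_eq_add, Complex.real_smul, Complex.real_smul]
      push_cast; ring
    have hc' : c - a = ((rc - ra : ℝ) : ℂ) * v := by
      rw [hra, hrc, vadd_eq_add, vadd_eq_add, Complex.real_smul, Complex.real_smul]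
      push_cast; ring
    rw [hb', hc', map_mul, Complex.conj_ofReal]
    have : ((rb - ra : ℝ) : ℂ) * v * (((rc - ra : ℝ) : ℂ) * (starRingEnd ℂ) v) =
        ((rb - ra : ℝ) : ℂ) * ((rc - ra : ℝ) : ℂ) * (v * (starRingEnd ℂ) v) := by ring
    rw [this, Complex.mul_conj]
    norm_cast
  · intro h
    by_cases hs : ∃ a ∈ s, ∃ b ∈ s, a ≠ b
    · obtain ⟨a, ha, b, hb, hab⟩ := hs
      rw [collinear_iff_exists_forall_eq_smul_vadd]
      refine ⟨a, b - a, fun c hc => ?_⟩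
      have hba : b - a ≠ 0 := sub_ne_zero.mpr (Ne.symm hab)
      refine ⟨((c - a) / (b - a)).re, ?_⟩
      have him : ((c - a) / (b - a)).im = 0 := by
        have h1 : ((b - a) * (starRingEnd ℂ) (c - a)).im = 0 := h a ha b hb c hc
        have h2 : ((c - a) * (starRingEnd ℂ) (b - a)).im = 0 := by
          have : (c - a) * (starRingEnd ℂ) (b - a) =
              (starRingEnd ℂ) ((b - a) * (starRingEnd ℂ) (c - a)) := by
            rw [map_mul, Complex.conj_conj]; ring
          rw [this, Complex.conj_im, h1, neg_zero]
        rw [div_eq_mul_inv, Complex.inv_def, ← mul_assoc, im_of_real_mul, h2, zero_mul]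
      have heq : ((c - a) / (b - a)) = ((((c - a) / (b - a)).re : ℝ) : ℂ) :=
        Complex.ext rfl (by rw [him, Complex.ofReal_im])
      have hc' : c - a = ((((c - a) / (b - a)).re : ℝ) : ℂ) * (b - a) := by
        rw [← heq]; field_simp
      rw [Complex.real_smul, vadd_eq_add, ← hc']
      ring
    · push_neg at hs
      have hss : s.Subsingleton := fun x hx y hy => by
        by_contra hne; exact hne (hs x hx y hy)
      rcases hss.eq_empty_or_singleton with h1 | ⟨x, h1⟩ <;> rw [h1]
      · exact collinear_empty ℝ ℂ
      · exact collinear_singleton ℝ x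

lemma collinear_affine_image {s : Set ℂ} (c d : ℂ) (h : Collinear ℝ s) :
    Collinear ℝ ((fun x => c * x + d) '' s) := by
  rw [collinear_iff_im] at h ⊢
  rintro a ⟨a', ha', rfl⟩ b ⟨b', hb', rfl⟩ e ⟨e', he', rfl⟩
  have h1 : (c * b' + d) - (c * a' + d) = c * (b' - a') := by ring
  have h2 : (c * e' + d) - (c * a' + d) = c * (e' - a') := by ring
  rw [h1, h2, map_mul]
  have : c * (b' - a') * ((starRingEnd ℂ) c * (starRingEnd ℂ) (e' - a')) =
      (c * (starRingEnd ℂ) c) * ((b' - a') * (starRingEnd ℂ) (e' - a')) := by ring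
  rw [this, Complex.mul_conj, Complex.mul_im, Complex.ofReal_re, Complex.ofReal_im,
    h a' ha' b' hb' e' he', mul_zero, zero_mul, add_zero]

def Complex.abs : AbsoluteValue ℂ ℝ where
  toFun := norm
  map_mul' := norm_mul
  nonneg' := norm_nonneg
  eq_zero' := fun _ => norm_eq_zero
  add_le' := norm_add_le

@[simp] lemma Complex.abs_eq_norm_shim (z : ℂ) : Complex.abs z = ‖z‖ := rfl

lemma Complex.abs_ofReal (r : ℝ) : Complex.abs (r : ℂ) = |r| := by
  simp [Complex.abs_eq_norm_shim]

lemma Complex.abs_conj (z : ℂ) : Complex.abs ((starRingEnd ℂ) z) = Complex.abs z := by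
  simp [Complex.abs_eq_norm_shim]

set_option maxHeartbeats 1000000 in
/-- For any pattern `P` with `|P| = k ≥ 3` and no `m` points on a line, there is a set
`A` of exactly `k² − k + 1` points, no `m` on a line, with `S_P(A) ≥ 2k − 1`. -/
theorem stmt4 (m k : ℕ) (hm : 3 ≤ m) (hk : 3 ≤ k) (P : Finset ℂ)
    (hPcard : P.card = k) (hPm : NoMOnLine m P) :
    ∃ A : Finset ℂ, A.card = k ^ 2 - k + 1 ∧ NoMOnLine m A ∧ 2 * k - 1 ≤ SP P A := by
  classical
  have hPne : P.Nonempty := Finset.card_pos.mp (by omega)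
  obtain ⟨q₀, hq₀P⟩ := hPne
  have hPne' : P.Nonempty := ⟨q₀, hq₀P⟩
  -- bound M on the points of P
  set M : ℝ := P.sup' hPne' (fun x => Complex.abs x) + 1 with hMdef
  have hMb : ∀ p ∈ P, Complex.abs p ≤ M := by
    intro p hp
    have := Finset.le_sup' (fun x => Complex.abs x) hp
    simp only [hMdef]; linarith
  have hM1 : (1:ℝ) ≤ M := by
    have h0 : (0:ℝ) ≤ Complex.abs q₀ := AbsoluteValue.nonneg _ _
    have := Finset.le_sup' (fun x => Complex.abs x) hq₀P
    simp only [hMdef]; linarith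
  have hM0 : (0:ℝ) < M := by linarith
  -- choose the generic rotation parameter r
  set W : Finset ℝ := ((P ×ˢ P) ×ˢ P ×ˢ P).image (fun x =>
    -(((x.1.2 - x.1.1) * (x.2.1 - q₀) * (starRingEnd ℂ) (x.2.2 - x.2.1)).im) /
      ((x.1.2 - x.1.1) * (x.2.1 - q₀) * (starRingEnd ℂ) (x.2.2 - x.2.1)).re) with hWdef
  obtain ⟨r, hr⟩ := Infinite.exists_notMem_finset W
  set z : ℂ := 1 + (r:ℂ) * Complex.I with hzdef
  have hzre : z.re = 1 := by simp [hzdef]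
  have hzim : z.im = r := by simp [hzdef]
  have hz0 : z ≠ 0 := by
    intro h0
    have : z.re = 0 := by rw [h0]; simp
    rw [hzre] at this; norm_num at this
  set Z : ℝ := 1 + |r| with hZdef
  have hZ1 : (1:ℝ) ≤ Z := by simp [hZdef]
  have hZ0 : (0:ℝ) < Z := by linarith
  have hzZ : Complex.abs z ≤ Z := by
    calc Complex.abs z ≤ Complex.abs 1 + Complex.abs ((r:ℂ) * Complex.I) :=
          Complex.abs.add_le _ _
    _ = 1 + |r| := by simp
    _ = Z := hZdef.symm
  have hgen : ∀ p ∈ P, ∀ p' ∈ P, ∀ q ∈ P, ∀ q' ∈ P, p ≠ p' → q ≠ q₀ → q' ≠ q →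
      (z * ((p' - p) * (q - q₀) * (starRingEnd ℂ) (q' - q))).im ≠ 0 := by
    intro p hp p' hp' q hq q' hq' hpp hqq0 hq'q
    set w : ℂ := (p' - p) * (q - q₀) * (starRingEnd ℂ) (q' - q) with hwdef
    have hw0 : w ≠ 0 := by
      exact mul_ne_zero (mul_ne_zero (sub_ne_zero.mpr (Ne.symm hpp)) (sub_ne_zero.mpr hqq0))
        ((map_ne_zero (starRingEnd ℂ)).mpr (sub_ne_zero.mpr hq'q))
    have him : (z * w).im = w.im + r * w.re := by
      rw [Complex.mul_im, hzre, hzim]; ring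
    intro h0
    rw [him] at h0
    by_cases hre : w.re = 0
    · rw [hre, mul_zero, add_zero] at h0
      exact hw0 (Complex.ext_iff.mpr ⟨by simpa using hre, by simpa using h0⟩)
    · apply hr
      rw [hWdef]
      refine Finset.mem_image.mpr ⟨((p, p'), (q, q')), ?_, ?_⟩
      · simp [Finset.mem_product, hp, hp', hq, hq']
      · simp only [← hwdef]
        field_simp
        linarith [h0]
  -- choose the scale s, small enough
  have keylt : ∀ C c : ℝ, 0 < c → ∀ᶠ s : ℝ in nhdsWithin 0 (Set.Ioi 0), s * C < c := by
    intro C c hc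
    have ht : Filter.Tendsto (fun s : ℝ => s * C) (nhdsWithin 0 (Set.Ioi 0)) (nhds 0) := by
      have h := ((continuous_id.mul (continuous_const (y := C)) : Continuous fun s : ℝ => s * C).tendsto (0:ℝ)).mono_left
        (nhdsWithin_le_nhds (s := Set.Ioi (0:ℝ)))
      have h0 : ((id : ℝ → ℝ) * fun _ : ℝ => C) 0 = 0 := by simp
      rw [h0] at h; exact h
    exact ht.eventually_lt_const hc
  have hsmall : ∃ s : ℝ, 0 < s ∧ s ≤ 1 ∧ s * (Z * M) < 1 ∧
      (∀ q ∈ P, ∀ q' ∈ P, q ≠ q' → s * (Z * (4 * M ^ 2)) < Complex.abs (q - q')) ∧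
      (∀ p ∈ P, ∀ p' ∈ P, ∀ q ∈ P, ∀ q' ∈ P, p ≠ p' → q ≠ q₀ → q' ≠ q →
        s * (Z ^ 2 * (16 * M ^ 4)) <
          |(z * ((p' - p) * (q - q₀) * (starRingEnd ℂ) (q' - q))).im|) ∧
      (∀ a ∈ P, ∀ b ∈ P, ∀ c ∈ P, ((b - a) * (starRingEnd ℂ) (c - a)).im ≠ 0 →
        s * (16 * Z * M ^ 3 + 16 * Z ^ 2 * M ^ 4) < |((b - a) * (starRingEnd ℂ) (c - a)).im|) := by
    have h0 : ∀ᶠ s : ℝ in nhdsWithin 0 (Set.Ioi 0), 0 < s :=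
      eventually_mem_nhdsWithin.mono fun s hs => hs
    have h1 : ∀ᶠ s : ℝ in nhdsWithin 0 (Set.Ioi 0), s ≤ 1 :=
      ((keylt 1 1 one_pos).mono fun s hs => by linarith [hs]).mono fun s hs => hs
    have h2 : ∀ᶠ s : ℝ in nhdsWithin 0 (Set.Ioi 0), s * (Z * M) < 1 := keylt _ _ one_pos
    have h3 : ∀ᶠ s : ℝ in nhdsWithin 0 (Set.Ioi 0),
        ∀ q ∈ P, ∀ q' ∈ P, q ≠ q' → s * (Z * (4 * M ^ 2)) < Complex.abs (q - q') := by
      rw [Filter.eventually_all_finset]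
      intro q hq
      rw [Filter.eventually_all_finset]
      intro q' hq'
      by_cases hqq : q = q'
      · exact Filter.Eventually.of_forall fun s h => absurd hqq h
      · have hpos : 0 < Complex.abs (q - q') := by
          simp [sub_eq_zero, hqq]
        exact (keylt _ _ hpos).mono fun s hs _ => hs
    have h4 : ∀ᶠ s : ℝ in nhdsWithin 0 (Set.Ioi 0),
        ∀ p ∈ P, ∀ p' ∈ P, ∀ q ∈ P, ∀ q' ∈ P, p ≠ p' → q ≠ q₀ → q' ≠ q →
        s * (Z ^ 2 * (16 * M ^ 4)) <
          |(z * ((p' - p) * (q - q₀) * (starRingEnd ℂ) (q' - q))).im| := by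
      rw [Filter.eventually_all_finset]; intro p hp
      rw [Filter.eventually_all_finset]; intro p' hp'
      rw [Filter.eventually_all_finset]; intro q hq
      rw [Filter.eventually_all_finset]; intro q' hq'
      by_cases hh : p ≠ p' ∧ q ≠ q₀ ∧ q' ≠ q
      · obtain ⟨hh1, hh2, hh3⟩ := hh
        have hpos : 0 < |(z * ((p' - p) * (q - q₀) * (starRingEnd ℂ) (q' - q))).im| :=
          abs_pos.mpr (hgen p hp p' hp' q hq q' hq' hh1 hh2 hh3)
        exact (keylt _ _ hpos).mono fun s hs _ _ _ => hs
      · refine Filter.Eventually.of_forall fun s h1 h2 h3 => absurd ⟨h1, h2, h3⟩ hh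
    have h5 : ∀ᶠ s : ℝ in nhdsWithin 0 (Set.Ioi 0),
        ∀ a ∈ P, ∀ b ∈ P, ∀ c ∈ P, ((b - a) * (starRingEnd ℂ) (c - a)).im ≠ 0 →
        s * (16 * Z * M ^ 3 + 16 * Z ^ 2 * M ^ 4) <
          |((b - a) * (starRingEnd ℂ) (c - a)).im| := by
      rw [Filter.eventually_all_finset]; intro a ha
      rw [Filter.eventually_all_finset]; intro b hb
      rw [Filter.eventually_all_finset]; intro c hc
      by_cases hh : ((b - a) * (starRingEnd ℂ) (c - a)).im ≠ 0
      · have hpos : 0 < |((b - a) * (starRingEnd ℂ) (c - a)).im| := abs_pos.mpr hh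
        exact (keylt _ _ hpos).mono fun s hs _ => hs
      · exact Filter.Eventually.of_forall fun s h => absurd h hh
    exact (((((h0.and h1).and h2).and h3).and h4).and h5).exists.imp
      fun s ⟨⟨⟨⟨⟨hs0, hs1⟩, hs2⟩, hs3⟩, hs4⟩, hs5⟩ => ⟨hs0, hs1, hs2, hs3, hs4, hs5⟩
  obtain ⟨s, hs0, hs1, hsZM, hC1, hC2, hC3⟩ := hsmall
  set t : ℂ := (s : ℂ) * z with htdef
  have ht0 : t ≠ 0 := mul_ne_zero (by exact_mod_cast ne_of_gt hs0) hz0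
  have htZ : Complex.abs t ≤ s * Z := by
    rw [htdef, map_mul, Complex.abs_ofReal, abs_of_pos hs0]
    exact mul_le_mul_of_nonneg_left hzZ (le_of_lt hs0)
  -- the map and the set A
  set g : ℂ → ℂ → ℂ := fun p q => q + t * (p * (q - q₀)) with hgdef
  have habs_a : ∀ p ∈ P, ∀ q ∈ P, Complex.abs (p * (q - q₀)) ≤ 2 * M ^ 2 := by
    intro p hp q hq
    rw [map_mul]
    have h1 : Complex.abs (q - q₀) ≤ 2 * M := by
      calc Complex.abs (q - q₀) ≤ Complex.abs q + Complex.abs q₀ := by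
            simpa using Complex.abs.sub_le q 0 q₀
      _ ≤ 2 * M := by linarith [hMb q hq, hMb q₀ hq₀P]
    calc Complex.abs p * Complex.abs (q - q₀) ≤ M * (2 * M) := by
          apply mul_le_mul (hMb p hp) h1 (AbsoluteValue.nonneg _ _) (le_of_lt hM0)
    _ = 2 * M ^ 2 := by ring
  have habs_t : ∀ p ∈ P, ∀ q ∈ P, Complex.abs (t * (p * (q - q₀))) ≤ s * Z * (2 * M ^ 2) := by
    intro p hp q hq
    rw [map_mul]
    apply mul_le_mul htZ (habs_a p hp q hq) (AbsoluteValue.nonneg _ _)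
    positivity
  have habs_sub : ∀ a ∈ P, ∀ b ∈ P, Complex.abs (a - b) ≤ 2 * M := by
    intro a ha b hb
    calc Complex.abs (a - b) ≤ Complex.abs a + Complex.abs b := by
          simpa using Complex.abs.sub_le a 0 b
    _ ≤ 2 * M := by linarith [hMb a ha, hMb b hb]
  have habs_t2 : ∀ p ∈ P, ∀ p' ∈ P, ∀ q ∈ P,
      Complex.abs (t * ((p - p') * (q - q₀))) ≤ s * Z * (4 * M ^ 2) := by
    intro p hp p' hp' q hq
    rw [map_mul Complex.abs t ((p - p') * (q - q₀)), map_mul Complex.abs (p - p') (q - q₀)]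
    have h1 : Complex.abs (p - p') * Complex.abs (q - q₀) ≤ (2 * M) * (2 * M) :=
      mul_le_mul (habs_sub p hp p' hp') (habs_sub q hq q₀ hq₀P) (AbsoluteValue.nonneg _ _)
        (by linarith)
    calc Complex.abs t * (Complex.abs (p - p') * Complex.abs (q - q₀))
        ≤ (s * Z) * ((2 * M) * (2 * M)) :=
          mul_le_mul htZ h1 (by positivity) (by positivity)
    _ = s * Z * (4 * M ^ 2) := by ring
  have habs_t3 : ∀ p ∈ P, ∀ p' ∈ P, ∀ q ∈ P, ∀ q' ∈ P,
      Complex.abs (t * (p * (q - q₀) - p' * (q' - q₀))) ≤ s * Z * (4 * M ^ 2) := by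
    intro p hp p' hp' q hq q' hq'
    rw [map_mul]
    have h1 : Complex.abs (p * (q - q₀) - p' * (q' - q₀)) ≤ 2 * M ^ 2 + 2 * M ^ 2 := by
      calc Complex.abs (p * (q - q₀) - p' * (q' - q₀))
          ≤ Complex.abs (p * (q - q₀)) + Complex.abs (p' * (q' - q₀)) := by
            simpa using Complex.abs.sub_le (p * (q - q₀)) 0 (p' * (q' - q₀))
      _ ≤ 2 * M ^ 2 + 2 * M ^ 2 := add_le_add (habs_a p hp q hq) (habs_a p' hp' q' hq')
    calc Complex.abs t * Complex.abs (p * (q - q₀) - p' * (q' - q₀))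
        ≤ (s * Z) * (2 * M ^ 2 + 2 * M ^ 2) :=
          mul_le_mul htZ h1 (AbsoluteValue.nonneg _ _) (by positivity)
    _ = s * Z * (4 * M ^ 2) := by ring
  have hgq₀ : ∀ p : ℂ, g p q₀ = q₀ := by
    intro p; simp [hgdef]
  -- the key injectivity property
  have hInj : ∀ p ∈ P, ∀ p' ∈ P, ∀ q ∈ P, ∀ q' ∈ P, g p q = g p' q' →
      (p = p' ∧ q = q') ∨ (q = q₀ ∧ q' = q₀) := by
    intro p hp p' hp' q hq q' hq' heq
    by_cases hqq : q = q'
    · subst hqq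
      simp only [hgdef] at heq
      have h1 : t * ((q - q₀) * (p - p')) = 0 := by linear_combination heq
      rcases mul_eq_zero.mp h1 with h2 | h2
      · exact absurd h2 ht0
      · rcases mul_eq_zero.mp h2 with h3 | h3
        · have : q = q₀ := sub_eq_zero.mp h3
          exact Or.inr ⟨this, this⟩
        · exact Or.inl ⟨sub_eq_zero.mp h3, rfl⟩
    · exfalso
      simp only [hgdef] at heq
      have hd : q - q' = t * (p' * (q' - q₀)) - t * (p * (q - q₀)) := by
        linear_combination heq
      have hub : Complex.abs (q - q') ≤ s * (Z * (4 * M ^ 2)) := by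
        rw [hd]
        calc Complex.abs (t * (p' * (q' - q₀)) - t * (p * (q - q₀)))
            ≤ Complex.abs (t * (p' * (q' - q₀))) + Complex.abs (t * (p * (q - q₀))) := by
              simpa using Complex.abs.sub_le (t * (p' * (q' - q₀))) 0 (t * (p * (q - q₀)))
        _ ≤ s * Z * (2 * M ^ 2) + s * Z * (2 * M ^ 2) :=
              add_le_add (habs_t p' hp' q' hq') (habs_t p hp q hq)
        _ = s * (Z * (4 * M ^ 2)) := by ring
      exact absurd hub (not_le.mpr (hC1 q hq q' hq' hqq))
  set Row : ℂ → Finset ℂ := fun p => P.image (fun q => g p q) with hRowdef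
  set Col : ℂ → Finset ℂ := fun q => P.image (fun p => g p q) with hColdef
  set A : Finset ℂ := P.biUnion Row with hAdef
  have hmemA : ∀ x : ℂ, x ∈ A ↔ ∃ p ∈ P, ∃ q ∈ P, g p q = x := by
    intro x
    simp [hAdef, hRowdef, Finset.mem_biUnion, Finset.mem_image]
  have hAcol : A = P.biUnion Col := by
    apply Finset.ext
    intro x
    rw [hmemA]
    simp only [Finset.mem_biUnion, hColdef, Finset.mem_image]
    constructor
    · rintro ⟨p, hp, q, hq, h⟩; exact ⟨q, hq, p, hp, h⟩
    · rintro ⟨q, hq, p, hp, h⟩; exact ⟨p, hp, q, hq, h⟩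
  -- cardinality of A
  have hColq₀ : Col q₀ = {q₀} := by
    simp only [hColdef]
    rw [show (fun p => g p q₀) = (fun _ : ℂ => q₀) from funext hgq₀]
    exact Finset.image_const ⟨q₀, hq₀P⟩ q₀
  have hColcard : ∀ q ∈ P, q ≠ q₀ → (Col q).card = k := by
    intro q hq hqq
    simp only [hColdef]
    rw [← hPcard]
    apply Finset.card_image_of_injOn
    intro p hp p' hp' heq
    rcases hInj p (by exact_mod_cast hp) p' (by exact_mod_cast hp') q hq q hq heq with
      ⟨h1, _⟩ | ⟨h1, _⟩
    · exact h1
    · exact absurd h1 hqq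
  have hdisjC : ∀ q ∈ P, ∀ q' ∈ P, q ≠ q' → Disjoint (Col q) (Col q') := by
    intro q hq q' hq' hqq
    rw [Finset.disjoint_left]
    intro x hx hx'
    simp only [hColdef, Finset.mem_image] at hx hx'
    obtain ⟨p, hp, hpx⟩ := hx
    obtain ⟨p', hp', hpx'⟩ := hx'
    rcases hInj p hp p' hp' q hq q' hq' (hpx.trans hpx'.symm) with ⟨_, h1⟩ | ⟨h1, h2⟩
    · exact hqq h1
    · exact hqq (h1.trans h2.symm)
  have hAcard : A.card = 1 + (k - 1) * k := by
    rw [hAcol, Finset.card_biUnion hdisjC]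
    rw [← Finset.sum_erase_add P _ hq₀P, hColq₀, Finset.card_singleton]
    have hsame : ∀ q ∈ P.erase q₀, (Col q).card = k := fun q hq =>
      hColcard q (Finset.mem_of_mem_erase hq) (Finset.ne_of_mem_erase hq)
    rw [Finset.sum_congr rfl hsame, Finset.sum_const, Finset.card_erase_of_mem hq₀P,
      hPcard, smul_eq_mul]
    ring
  have hAcard' : A.card = k ^ 2 - k + 1 := by
    rw [hAcard]
    have h2 : k ^ 2 = k * k := sq k
    have h3 : (k - 1) * k = k * k - k := by rw [Nat.sub_mul, one_mul]
    have h4 : k ≤ k * k := Nat.le_mul_of_pos_left k (by omega)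
    omega
  have hnom : NoMOnLine m A := by
    intro S hSA hScol
    by_contra hcard
    push_neg at hcard
    have hmS : m ≤ S.card := by omega
    obtain ⟨S', hS'S, hS'card⟩ := Finset.exists_subset_card_eq hmS
    have hS'A : S' ⊆ A := hS'S.trans hSA
    have hS'col : Collinear ℝ (S' : Set ℂ) := hScol.subset (by exact_mod_cast hS'S)
    have hrep : ∀ x : ℂ, ∃ pq : ℂ × ℂ, x ∈ A → pq.1 ∈ P ∧ pq.2 ∈ P ∧ g pq.1 pq.2 = x := by
      intro x
      by_cases hx : x ∈ A
      · obtain ⟨p, hp, q, hq, h⟩ := (hmemA x).mp hx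
        exact ⟨(p, q), fun _ => ⟨hp, hq, h⟩⟩
      · exact ⟨(0, 0), fun h => absurd h hx⟩
    choose rep hrepspec using hrep
    have hrep1 : ∀ x ∈ S', (rep x).1 ∈ P := fun x hx => (hrepspec x (hS'A hx)).1
    have hrep2 : ∀ x ∈ S', (rep x).2 ∈ P := fun x hx => (hrepspec x (hS'A hx)).2.1
    have hrep3 : ∀ x ∈ S', g (rep x).1 (rep x).2 = x := fun x hx => (hrepspec x (hS'A hx)).2.2
    have hq0rep : ∀ x ∈ S', (rep x).2 = q₀ → x = q₀ := by
      intro x hx h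
      rw [← hrep3 x hx, h, hgq₀]
    have himS' : ∀ a ∈ S', ∀ b ∈ S', ∀ c ∈ S',
        ((b - a) * (starRingEnd ℂ) (c - a)).im = 0 := by
      have hh := (collinear_iff_im (S' : Set ℂ)).mp hS'col
      intro a ha b hb c hc
      exact hh a (by exact_mod_cast ha) b (by exact_mod_cast hb) c (by exact_mod_cast hc)
    by_cases hcase : ∃ x ∈ S', ∃ y ∈ S', x ≠ y ∧ (rep x).2 = (rep y).2
    · obtain ⟨x, hx, y, hy, hxy, hqeq⟩ := hcase
      have hqP : (rep x).2 ∈ P := hrep2 x hx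
      have hq0 : (rep x).2 ≠ q₀ := by
        intro h
        exact hxy ((hq0rep x hx h).trans (hq0rep y hy (hqeq.symm.trans h)).symm)
      have hpxy : (rep x).1 ≠ (rep y).1 := by
        intro h
        apply hxy
        rw [← hrep3 x hx, ← hrep3 y hy, h, hqeq]
      by_cases hu : ∃ u ∈ S', (rep u).2 ≠ (rep x).2
      · obtain ⟨u, hu', hqu⟩ := hu
        have hq'P : (rep u).2 ∈ P := hrep2 u hu'
        have hpuP : (rep u).1 ∈ P := hrep1 u hu'
        have hpxP : (rep x).1 ∈ P := hrep1 x hx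
        have hpyP : (rep y).1 ∈ P := hrep1 y hy
        have hyx : y - x = t * (((rep y).1 - (rep x).1) * ((rep x).2 - q₀)) := by
          conv_lhs => rw [← hrep3 x hx, ← hrep3 y hy, ← hqeq]
          simp only [hgdef]; ring
        have hux : u - x = ((rep u).2 - (rep x).2) +
            t * ((rep u).1 * ((rep u).2 - q₀) - (rep x).1 * ((rep x).2 - q₀)) := by
          conv_lhs => rw [← hrep3 x hx, ← hrep3 u hu']
          simp only [hgdef]; ring
        have him := himS' x hx y hy u hu'
        have hexp : (y - x) * (starRingEnd ℂ) (u - x) =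
            (s : ℂ) * (z * (((rep y).1 - (rep x).1) * ((rep x).2 - q₀) *
              (starRingEnd ℂ) ((rep u).2 - (rep x).2))) +
            (t * (((rep y).1 - (rep x).1) * ((rep x).2 - q₀))) *
              (starRingEnd ℂ) (t * ((rep u).1 * ((rep u).2 - q₀) -
                (rep x).1 * ((rep x).2 - q₀))) := by
          rw [hyx, hux]
          simp only [htdef, map_add, map_sub, map_mul, Complex.conj_ofReal]
          ring
        set X : ℂ := z * (((rep y).1 - (rep x).1) * ((rep x).2 - q₀) *
            (starRingEnd ℂ) ((rep u).2 - (rep x).2)) with hXdef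
        set E : ℂ := (t * (((rep y).1 - (rep x).1) * ((rep x).2 - q₀))) *
            (starRingEnd ℂ) (t * ((rep u).1 * ((rep u).2 - q₀) -
              (rep x).1 * ((rep x).2 - q₀))) with hEdef
        have him2 : 0 = s * X.im + E.im := by
          rw [← him, hexp, Complex.add_im, ofReal_mul_im']
        have hEbound : |E.im| ≤ s * (s * (Z ^ 2 * (16 * M ^ 4))) := by
          calc |E.im| ≤ Complex.abs E := Complex.abs_im_le_norm E
          _ = Complex.abs (t * (((rep y).1 - (rep x).1) * ((rep x).2 - q₀))) *
              Complex.abs (t * ((rep u).1 * ((rep u).2 - q₀) -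
                (rep x).1 * ((rep x).2 - q₀))) := by
              rw [hEdef, map_mul, Complex.abs_conj]
          _ ≤ (s * Z * (4 * M ^ 2)) * (s * Z * (4 * M ^ 2)) :=
              mul_le_mul (habs_t2 _ hpyP _ hpxP _ hqP)
                (habs_t3 _ hpuP _ hpxP _ hq'P _ hqP) (AbsoluteValue.nonneg _ _)
                (by positivity)
          _ = s * (s * (Z ^ 2 * (16 * M ^ 4))) := by ring
        have hXlb : s * (Z ^ 2 * (16 * M ^ 4)) < |X.im| :=
          hC2 _ hpxP _ hpyP _ hqP _ hq'P hpxy hq0 hqu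
        have hsX : s * |X.im| ≤ s * (s * (Z ^ 2 * (16 * M ^ 4))) := by
          have hE' : s * X.im = -E.im := by linarith
          calc s * |X.im| = |s * X.im| := by
                rw [abs_mul, abs_of_pos hs0]
          _ = |E.im| := by rw [hE', abs_neg]
          _ ≤ _ := hEbound
        have h1 : |X.im| ≤ s * (Z ^ 2 * (16 * M ^ 4)) :=
          le_of_mul_le_mul_left hsX hs0
        linarith
      · push_neg at hu
        set c : ℂ := (t * ((rep x).2 - q₀))⁻¹ with hcdef
        set d : ℂ := -((t * ((rep x).2 - q₀))⁻¹ * (rep x).2) with hddef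
        have htq : t * ((rep x).2 - q₀) ≠ 0 := mul_ne_zero ht0 (sub_ne_zero.mpr hq0)
        have h3 : c * (t * ((rep x).2 - q₀)) = 1 := inv_mul_cancel₀ htq
        have hpf : ∀ u ∈ S', (rep u).1 = c * u + d := by
          intro u hu'
          have h2 : u - (rep x).2 = t * ((rep u).1 * ((rep x).2 - q₀)) := by
            conv_lhs => rw [← hrep3 u hu', hu u hu']
            simp only [hgdef]; ring
          calc (rep u).1 = c * (t * ((rep x).2 - q₀)) * (rep u).1 := by rw [h3]; ring
          _ = c * (u - (rep x).2) := by rw [h2]; ring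
          _ = c * u + d := by rw [hddef]; ring
        have hTP : (S'.image fun u => (rep u).1) ⊆ P := by
          intro w hw
          obtain ⟨u, hu', rfl⟩ := Finset.mem_image.mp hw
          exact hrep1 u hu'
        have hTcard : (S'.image fun u => (rep u).1).card = m := by
          rw [Finset.card_image_of_injOn, hS'card]
          intro a ha b hb hab
          have ha' : a ∈ S' := by exact_mod_cast ha
          have hb' : b ∈ S' := by exact_mod_cast hb
          dsimp only at hab
          calc a = g (rep a).1 (rep a).2 := (hrep3 a ha').symm
          _ = g (rep b).1 (rep b).2 := by rw [hab, hu a ha', hu b hb']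
          _ = b := hrep3 b hb'
        have hTcol : Collinear ℝ ((S'.image fun u => (rep u).1 : Finset ℂ) : Set ℂ) := by
          have himg : ((S'.image fun u => (rep u).1 : Finset ℂ) : Set ℂ) =
              (fun w => c * w + d) '' (S' : Set ℂ) := by
            rw [Finset.coe_image]
            apply Set.image_congr
            intro u hu'
            exact hpf u (by exact_mod_cast hu')
          rw [himg]
          exact collinear_affine_image c d hS'col
        have hcon := hPm _ hTP hTcol
        omega
    · push_neg at hcase
      set L : Finset ℂ := S'.image fun u => (rep u).2 with hLdef
      have hLP : L ⊆ P := by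
        intro w hw
        obtain ⟨u, hu', rfl⟩ := Finset.mem_image.mp hw
        exact hrep2 u hu'
      have hLcard : L.card = m := by
        rw [hLdef, Finset.card_image_of_injOn, hS'card]
        intro a ha b hb hab
        dsimp only at hab
        by_contra hne
        exact hcase a (by exact_mod_cast ha) b (by exact_mod_cast hb) hne hab
      have hLcol : Collinear ℝ (L : Set ℂ) := by
        rw [collinear_iff_im]
        intro qa hqa qb hqb qc hqc
        obtain ⟨xa, hxa, hqa'⟩ := Finset.mem_image.mp (by exact_mod_cast hqa : qa ∈ L)
        obtain ⟨xb, hxb, hqb'⟩ := Finset.mem_image.mp (by exact_mod_cast hqb : qb ∈ L)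
        obtain ⟨xc, hxc, hqc'⟩ := Finset.mem_image.mp (by exact_mod_cast hqc : qc ∈ L)
        by_contra hne0
        have hqaP : qa ∈ P := hLP (by exact_mod_cast hqa)
        have hqbP : qb ∈ P := hLP (by exact_mod_cast hqb)
        have hqcP : qc ∈ P := hLP (by exact_mod_cast hqc)
        have hkey := hC3 qa hqaP qb hqbP qc hqcP hne0
        have hgxa : g (rep xa).1 qa = xa := by rw [← hqa']; exact hrep3 xa hxa
        have hxa' : xa = qa + t * ((rep xa).1 * (qa - q₀)) := by
          conv_lhs => rw [← hgxa]
        have hgxb : g (rep xb).1 qb = xb := by rw [← hqb']; exact hrep3 xb hxb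
        have hxb' : xb = qb + t * ((rep xb).1 * (qb - q₀)) := by
          conv_lhs => rw [← hgxb]
        have hgxc : g (rep xc).1 qc = xc := by rw [← hqc']; exact hrep3 xc hxc
        have hxc' : xc = qc + t * ((rep xc).1 * (qc - q₀)) := by
          conv_lhs => rw [← hgxc]
        have him := himS' xa hxa xb hxb xc hxc
        set Da : ℂ := t * ((rep xb).1 * (qb - q₀) - (rep xa).1 * (qa - q₀)) with hDadef
        set Dc : ℂ := t * ((rep xc).1 * (qc - q₀) - (rep xa).1 * (qa - q₀)) with hDcdef
        have hexp : (xb - xa) * (starRingEnd ℂ) (xc - xa) =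
            (qb - qa) * (starRingEnd ℂ) (qc - qa) +
            (Da * (starRingEnd ℂ) (qc - qa) + (qb - qa) * (starRingEnd ℂ) Dc +
              Da * (starRingEnd ℂ) Dc) := by
          rw [hxb', hxc', hxa', hDadef, hDcdef]
          simp only [map_add, map_sub, map_mul]
          ring
        have him2 : ((qb - qa) * (starRingEnd ℂ) (qc - qa)).im =
            -(Da * (starRingEnd ℂ) (qc - qa) + (qb - qa) * (starRingEnd ℂ) Dc +
              Da * (starRingEnd ℂ) Dc).im := by
          have := him
          rw [hexp, Complex.add_im] at this
          linarith
        have hDa : Complex.abs Da ≤ s * Z * (4 * M ^ 2) :=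
          habs_t3 _ (hrep1 xb hxb) _ (hrep1 xa hxa) _ hqbP _ hqaP
        have hDc : Complex.abs Dc ≤ s * Z * (4 * M ^ 2) :=
          habs_t3 _ (hrep1 xc hxc) _ (hrep1 xa hxa) _ hqcP _ hqaP
        have herr : |((qb - qa) * (starRingEnd ℂ) (qc - qa)).im| ≤
            s * (16 * Z * M ^ 3 + 16 * Z ^ 2 * M ^ 4) := by
          rw [him2, abs_neg]
          have hb1 : Complex.abs (Da * (starRingEnd ℂ) (qc - qa)) ≤
              (s * Z * (4 * M ^ 2)) * (2 * M) := by
            rw [map_mul, Complex.abs_conj]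
            exact mul_le_mul hDa (habs_sub qc hqcP qa hqaP) (AbsoluteValue.nonneg _ _)
              (by positivity)
          have hb2 : Complex.abs ((qb - qa) * (starRingEnd ℂ) Dc) ≤
              (2 * M) * (s * Z * (4 * M ^ 2)) := by
            rw [map_mul, Complex.abs_conj]
            exact mul_le_mul (habs_sub qb hqbP qa hqaP) hDc (AbsoluteValue.nonneg _ _)
              (by positivity)
          have hb3 : Complex.abs (Da * (starRingEnd ℂ) Dc) ≤
              (s * Z * (4 * M ^ 2)) * (s * Z * (4 * M ^ 2)) := by
            rw [map_mul, Complex.abs_conj]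
            exact mul_le_mul hDa hDc (AbsoluteValue.nonneg _ _) (by positivity)
          have htri : Complex.abs (Da * (starRingEnd ℂ) (qc - qa) +
              (qb - qa) * (starRingEnd ℂ) Dc + Da * (starRingEnd ℂ) Dc) ≤
              Complex.abs (Da * (starRingEnd ℂ) (qc - qa)) +
              Complex.abs ((qb - qa) * (starRingEnd ℂ) Dc) +
              Complex.abs (Da * (starRingEnd ℂ) Dc) := by
            calc Complex.abs _ ≤ Complex.abs (Da * (starRingEnd ℂ) (qc - qa) +
                  (qb - qa) * (starRingEnd ℂ) Dc) + Complex.abs (Da * (starRingEnd ℂ) Dc) :=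
                Complex.abs.add_le _ _
            _ ≤ _ := by
                have := Complex.abs.add_le (Da * (starRingEnd ℂ) (qc - qa))
                  ((qb - qa) * (starRingEnd ℂ) Dc)
                linarith
          have hs2 : s * s ≤ s := by nlinarith
          calc |(Da * (starRingEnd ℂ) (qc - qa) + (qb - qa) * (starRingEnd ℂ) Dc +
                Da * (starRingEnd ℂ) Dc).im| ≤ _ := Complex.abs_im_le_norm _
          _ ≤ _ := htri
          _ ≤ (s * Z * (4 * M ^ 2)) * (2 * M) + (2 * M) * (s * Z * (4 * M ^ 2)) +
              (s * Z * (4 * M ^ 2)) * (s * Z * (4 * M ^ 2)) := by linarith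
          _ ≤ s * (16 * Z * M ^ 3 + 16 * Z ^ 2 * M ^ 4) := by nlinarith [hZ1, hM1, hs0.le]
        linarith
      have hcon := hPm L hLP hLcol
      omega
  -- the 2k-1 similar copies
  have hRowSim : ∀ p ∈ P, SimilarCopy P (Row p) := by
    intro p hp
    have hne : (1 : ℂ) + t * p ≠ 0 := by
      intro h0
      have h1 : Complex.abs (t * p) = 1 := by
        have hh : t * p = -1 := by linear_combination h0
        rw [hh]; simp
      have h2 : Complex.abs (t * p) ≤ s * (Z * M) := by
        rw [map_mul Complex.abs t p]
        calc Complex.abs t * Complex.abs p ≤ (s * Z) * M :=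
              mul_le_mul htZ (hMb p hp) (AbsoluteValue.nonneg _ _) (by positivity)
        _ = s * (Z * M) := by ring
      rw [h1] at h2
      linarith
    refine ⟨1 + t * p, -(t * (p * q₀)), hne, ?_⟩
    simp only [hRowdef]
    rw [Finset.coe_image]
    apply Set.image_congr
    intro q _
    simp only [hgdef]
    ring
  have hColSim : ∀ q ∈ P, q ≠ q₀ → SimilarCopy P (Col q) := by
    intro q hq hqq
    refine ⟨t * (q - q₀), q, mul_ne_zero ht0 (sub_ne_zero.mpr hqq), ?_⟩
    simp only [hColdef]
    rw [Finset.coe_image]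
    apply Set.image_congr
    intro p _
    simp only [hgdef]
    ring
  have hRowsubA : ∀ p ∈ P, Row p ⊆ A := by
    intro p hp
    rw [hAdef]
    exact Finset.subset_biUnion_of_mem Row hp
  have hColsubA : ∀ q ∈ P, Col q ⊆ A := by
    intro q hq
    rw [hAcol]
    exact Finset.subset_biUnion_of_mem Col hq
  have hq₀Row : ∀ p : ℂ, q₀ ∈ Row p := by
    intro p
    simp only [hRowdef]
    exact Finset.mem_image.mpr ⟨q₀, hq₀P, hgq₀ p⟩
  have hq₀Col : ∀ q ∈ P, q ≠ q₀ → q₀ ∉ Col q := by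
    intro q hq hqq hmem
    simp only [hColdef] at hmem
    obtain ⟨p', hp', hg⟩ := Finset.mem_image.mp hmem
    rcases hInj p' hp' q₀ hq₀P q hq q₀ hq₀P (hg.trans (hgq₀ q₀).symm) with ⟨_, h2⟩ | ⟨h2, _⟩
    · exact hqq h2
    · exact hqq h2
  obtain ⟨q₁, hq₁P, hq₁0⟩ := Finset.exists_mem_ne (s := P) (by omega) q₀
  have hRowInj : Set.InjOn Row (P : Set ℂ) := by
    intro p hp p' hp' heq
    have hpF : p ∈ P := by exact_mod_cast hp
    have hp'F : p' ∈ P := by exact_mod_cast hp'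
    have h1 : g p q₁ ∈ Row p := by
      simp only [hRowdef]
      exact Finset.mem_image.mpr ⟨q₁, hq₁P, rfl⟩
    rw [heq] at h1
    simp only [hRowdef] at h1
    obtain ⟨q', hq', hg⟩ := Finset.mem_image.mp h1
    rcases hInj p' hp'F p hpF q' hq' q₁ hq₁P hg with ⟨h2, _⟩ | ⟨_, h2⟩
    · exact h2.symm
    · exact absurd h2 hq₁0
  have hColInj : Set.InjOn Col ((P.erase q₀ : Finset ℂ) : Set ℂ) := by
    intro q hq q' hq' heq
    have hqP' : q ∈ P := Finset.mem_of_mem_erase (by exact_mod_cast hq)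
    have hq'P' : q' ∈ P := Finset.mem_of_mem_erase (by exact_mod_cast hq')
    have hqne : q ≠ q₀ := Finset.ne_of_mem_erase (by exact_mod_cast hq)
    have h1 : g q₀ q ∈ Col q := by
      simp only [hColdef]
      exact Finset.mem_image.mpr ⟨q₀, hq₀P, rfl⟩
    rw [heq] at h1
    simp only [hColdef] at h1
    obtain ⟨p', hp', hg⟩ := Finset.mem_image.mp h1
    rcases hInj p' hp' q₀ hq₀P q' hq'P' q hqP' hg with ⟨_, h2⟩ | ⟨_, h2⟩
    · exact h2.symm
    · exact absurd h2 hqne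
  set F : Finset (Finset ℂ) := (P.image Row) ∪ ((P.erase q₀).image Col) with hFdef
  have hFsub : F ⊆ A.powerset.filter (SimilarCopy P) := by
    intro B hB
    rw [hFdef, Finset.mem_union] at hB
    rcases hB with hB | hB
    · obtain ⟨p, hp, rfl⟩ := Finset.mem_image.mp hB
      exact Finset.mem_filter.mpr ⟨Finset.mem_powerset.mpr (hRowsubA p hp), hRowSim p hp⟩
    · obtain ⟨q, hq, rfl⟩ := Finset.mem_image.mp hB
      have hqP' : q ∈ P := Finset.mem_of_mem_erase hq
      have hqne : q ≠ q₀ := Finset.ne_of_mem_erase hq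
      exact Finset.mem_filter.mpr ⟨Finset.mem_powerset.mpr (hColsubA q hqP'),
        hColSim q hqP' hqne⟩
  have hFdisj : Disjoint (P.image Row) ((P.erase q₀).image Col) := by
    rw [Finset.disjoint_left]
    intro B hB hB'
    obtain ⟨p, hp, rfl⟩ := Finset.mem_image.mp hB
    obtain ⟨q, hq, hBq⟩ := Finset.mem_image.mp hB'
    have hqP' : q ∈ P := Finset.mem_of_mem_erase hq
    have hqne : q ≠ q₀ := Finset.ne_of_mem_erase hq
    exact hq₀Col q hqP' hqne (hBq ▸ hq₀Row p)
  have hFcard : F.card = k + (k - 1) := by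
    rw [hFdef, Finset.card_union_of_disjoint hFdisj,
      Finset.card_image_of_injOn hRowInj,
      Finset.card_image_of_injOn hColInj,
      Finset.card_erase_of_mem hq₀P, hPcard]
  have hSP : 2 * k - 1 ≤ SP P A := by
    have hle : F.card ≤ (A.powerset.filter (SimilarCopy P)).card := Finset.card_le_card hFsub
    have hSPdef : SP P A = (A.powerset.filter (SimilarCopy P)).card := by
      unfold SP
      congr 1
    rw [hSPdef]
    omega
  exact ⟨A, hAcard', hnom, hSP⟩
end
end

section
/- Let T ⊆ ℂ be a set of three non-collinear points forming a scalene triangle, i.e., the three pairwise distances between points of T are pairwise distinct. Then there exist a constant c > 0 and a threshold N such that for all n ≥ N, S_T(n, 3) ≥ c·n^{log 9 / log 5}. -/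
open MeasureTheory

noncomputable section

/-- The triangle with vertices `a`, `b`, `c`. -/
def tri (a b c : ℂ) : Finset ℂ :=
  letI := Classical.decEq ℂ
  {a, b, c}


open Complex Polynomial

theorem collinear_triple_iff {p q r : ℂ} (h : q ≠ p) :
    Collinear ℝ ({p, q, r} : Set ℂ) ↔ ((r - p) * (starRingEnd ℂ) (q - p)).im = 0 := by
  constructor
  · intro hc
    rw [collinear_iff_of_mem (show p ∈ ({p,q,r}:Set ℂ) by simp)] at hc
    obtain ⟨v, hv⟩ := hc
    obtain ⟨tq, hq⟩ := hv q (by simp)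
    obtain ⟨tr, hr⟩ := hv r (by simp)
    have hq' : q - p = (tq : ℂ) * v := by
      rw [hq, Complex.real_smul, vadd_eq_add]; ring
    have hr' : r - p = (tr : ℂ) * v := by
      rw [hr, Complex.real_smul, vadd_eq_add]; ring
    rw [hq', hr']
    simp [Complex.mul_im, Complex.mul_re, Complex.conj_re, Complex.conj_im]
    ring
  · intro him
    rw [collinear_iff_of_mem (show p ∈ ({p,q,r}:Set ℂ) by simp)]
    refine ⟨q - p, fun x hx => ?_⟩
    rcases hx with hx | hx | hx
    · exact ⟨0, by simp [hx]⟩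
    · exact ⟨1, by simp [hx]⟩
    · simp only [Set.mem_singleton_iff] at hx
      subst hx
      have hqp : q - p ≠ 0 := sub_ne_zero.mpr h
      refine ⟨((x - p) / (q - p)).re, ?_⟩
      have hreal : ((x - p) / (q - p)).im = 0 := by
        rw [Complex.div_im, Complex.normSq_apply]
        simp only [Complex.mul_im, Complex.conj_re, Complex.conj_im, Complex.sub_re,
          Complex.sub_im] at him
        have hns : (q - p).re * (q - p).re + (q - p).im * (q - p).im ≠ 0 := by
          intro h0
          apply hqp
          have h1 : (q-p).re = 0 ∧ (q-p).im = 0 := by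
            constructor <;> nlinarith [sq_nonneg ((q-p).re), sq_nonneg ((q-p).im)]
          exact Complex.ext h1.1 h1.2
        rw [div_sub_div_same, _root_.div_eq_zero_iff]
        left
        simp only [Complex.sub_re, Complex.sub_im]
        linarith
      have key : (x - p) / (q - p) = (((x - p) / (q - p)).re : ℂ) :=
        Complex.ext rfl (by simpa using hreal)
      rw [Complex.real_smul, vadd_eq_add]
      have : x - p = (((x - p) / (q - p)).re : ℂ) * (q - p) := by
        rw [← key]; field_simp
      linear_combination this
-- paste defs inline for testing
theorem image_affine_comp (z1 w1 z2 w2 : ℂ) (X : Set ℂ) :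
    (fun p => z2 * p + w2) '' ((fun p => z1 * p + w1) '' X)
      = (fun p => (z2*z1) * p + (z2*w1+w2)) '' X := by
  rw [Set.image_image]; apply Set.image_congr; intro x _; ring

theorem simTrans {P Q R : Finset ℂ} (h1 : SimilarCopy P Q) (h2 : SimilarCopy Q R) : SimilarCopy P R := by
  obtain ⟨z1, w1, hz1, he1⟩ := h1
  obtain ⟨z2, w2, hz2, he2⟩ := h2
  exact ⟨z2*z1, z2*w1+w2, mul_ne_zero hz2 hz1, by rw [he2, he1, image_affine_comp]⟩

theorem simSymm {P Q : Finset ℂ} (h : SimilarCopy P Q) : SimilarCopy Q P := by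
  obtain ⟨z, w, hz, he⟩ := h
  refine ⟨z⁻¹, -w/z, inv_ne_zero hz, ?_⟩
  rw [he, image_affine_comp]
  have h1 : z⁻¹ * z = 1 := by field_simp
  have h2 : z⁻¹ * w + -w/z = 0 := by field_simp; ring
  rw [h1, h2]
  simp

theorem sim_pred_iff {P P' : Finset ℂ} (h : SimilarCopy P P') (S : Finset ℂ) :
    SimilarCopy P S ↔ SimilarCopy P' S :=
  ⟨fun h2 => simTrans (simSymm h) h2, fun h2 => simTrans h h2⟩

theorem SP_congr {P P' : Finset ℂ} (h : SimilarCopy P P') (Q : Finset ℂ) : SP P Q = SP P' Q := by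
  unfold SP
  classical
  congr 1
  apply Finset.filter_congr
  intro S _
  exact sim_pred_iff h S

theorem SP_mono {P Q Q' : Finset ℂ} (h : Q ⊆ Q') : SP P Q ≤ SP P Q' := by
  unfold SP
  classical
  apply Finset.card_le_card
  apply Finset.filter_subset_filter
  exact Finset.powerset_mono.mpr h
theorem coe_tri (a b c : ℂ) : ((tri a b c : Finset ℂ) : Set ℂ) = {a, b, c} := by
  unfold tri; simp

structure GoodShape (z : ℂ) : Prop where
  him : z.im ≠ 0
  habs : ‖z‖ ≠ 1
  habs1 : ‖z - 1‖ ≠ 1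
  hre0 : z.re ≠ 0
  hre2 : z.re ≠ 1/2

theorem exists_goodshape (a b c : ℂ) (hncol : ¬ Collinear ℝ ({a, b, c} : Set ℂ))
    (hsc : dist a b ≠ dist a c ∧ dist a b ≠ dist b c ∧ dist a c ≠ dist b c) :
    ∃ z : ℂ, GoodShape z ∧ SimilarCopy (tri a b c) (tri 0 1 z) := by
  have hba : b ≠ a := by
    rintro rfl
    exact hncol (by simpa using collinear_pair ℝ b c)
  have hba' : b - a ≠ 0 := sub_ne_zero.mpr hba
  set z1 : ℂ := (c - a) / (b - a) with hz1def
  have him : z1.im ≠ 0 := by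
    intro h0
    apply hncol
    rw [show ({a,b,c} : Set ℂ) = {a,b,c} by rfl, collinear_triple_iff hba]
    have hca : (c - a) = z1 * (b - a) := by rw [hz1def, div_mul_cancel₀ _ hba']
    rw [hca]
    simp only [Complex.mul_im, Complex.mul_re, Complex.conj_re, Complex.conj_im, h0]
    ring
  have habsz1 : ‖z1‖ = dist a c / dist a b := by
    rw [hz1def, norm_div, Complex.dist_eq, Complex.dist_eq,
      norm_sub_rev (c) a, norm_sub_rev b a]
  have habsz1' : ‖z1 - 1‖ = dist b c / dist a b := by
    have h : z1 - 1 = (c - b)/(b - a) := by rw [hz1def]; field_simp; try ring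
    rw [h, norm_div, Complex.dist_eq, Complex.dist_eq,
      norm_sub_rev c b, norm_sub_rev b a]
  have hdab : (0:ℝ) < dist a b := by
    rw [dist_pos]; rintro rfl; exact hba rfl
  have h1 : ‖z1‖ ≠ 1 := by
    rw [habsz1]; intro h; apply hsc.1
    field_simp at h; linarith
  have h2 : ‖z1 - 1‖ ≠ 1 := by
    rw [habsz1']; intro h; apply hsc.2.1
    field_simp at h; linarith
  have h3 : ‖z1‖ ≠ ‖z1 - 1‖ := by
    rw [habsz1, habsz1']; intro h; apply hsc.2.2
    field_simp at h; linarith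
  have sim1 : SimilarCopy (tri a b c) (tri 0 1 z1) := by
    refine ⟨(b-a)⁻¹, -a/(b-a), inv_ne_zero hba', ?_⟩
    rw [coe_tri, coe_tri]
    ext x
    simp only [Set.mem_insert_iff, Set.mem_singleton_iff, Set.mem_image]
    constructor
    · rintro (rfl | rfl | rfl)
      · exact ⟨a, Or.inl rfl, by field_simp; ring⟩
      · exact ⟨b, Or.inr (Or.inl rfl), by field_simp; try ring⟩
      · exact ⟨c, Or.inr (Or.inr rfl), by rw [hz1def]; field_simp; try ring⟩
    · rintro ⟨p, (rfl | rfl | rfl), rfl⟩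
      · left; field_simp; ring
      · right; left; field_simp; try ring
      · right; right; rw [hz1def]; field_simp; try ring
  by_cases hc2 : z1.re = 0
  · refine ⟨1 - z1, ⟨?_, ?_, ?_, ?_, ?_⟩, simTrans sim1 ?_⟩
    · simpa using him
    · rw [show (1:ℂ) - z1 = -(z1 - 1) by ring, norm_neg]; exact h2
    · rw [show (1:ℂ) - z1 - 1 = -z1 by ring, norm_neg]; exact h1
    · simp [Complex.sub_re, hc2]
    · simp only [Complex.sub_re, Complex.one_re, hc2, sub_zero]; norm_num
    · refine ⟨-1, 1, by norm_num, ?_⟩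
      rw [coe_tri, coe_tri]
      ext x
      simp only [Set.mem_insert_iff, Set.mem_singleton_iff, Set.mem_image]
      constructor
      · rintro (rfl | rfl | rfl)
        · exact ⟨1, Or.inr (Or.inl rfl), by ring⟩
        · exact ⟨0, Or.inl rfl, by ring⟩
        · exact ⟨z1, Or.inr (Or.inr rfl), by ring⟩
      · rintro ⟨p, (rfl | rfl | rfl), rfl⟩
        · right; left; ring
        · left; ring
        · right; right; ring
  by_cases hc3 : z1.re = 1/2
  · have hz1ne : z1 ≠ 0 := fun h => him (by rw [h]; simp)
    have hns : Complex.normSq z1 ≠ 0 := by simpa using hz1ne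
    refine ⟨1/z1, ⟨?_, ?_, ?_, ?_, ?_⟩, simTrans sim1 ?_⟩
    · rw [one_div, Complex.inv_im]
      simp only [neg_ne_zero, ne_eq, _root_.div_eq_zero_iff, not_or]
      exact ⟨him, hns⟩
    · rw [norm_div, norm_one]
      intro h
      apply h1
      have habsne : ‖z1‖ ≠ 0 := by simpa using hz1ne
      field_simp at h
      rw [h]
    · have h : 1/z1 - 1 = -((z1 - 1)/z1) := by field_simp; ring
      rw [h, norm_neg, norm_div]
      intro hh
      apply h3
      have habsne : ‖z1‖ ≠ 0 := by simpa using hz1ne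
      field_simp at hh
      rw [hh]
    · rw [one_div, Complex.inv_re, hc3]
      positivity
    · rw [one_div, Complex.inv_re, hc3]
      intro h
      have hnsq : Complex.normSq z1 = 1 := by field_simp at h; linarith
      apply h1
      rw [← Complex.sq_norm] at hnsq
      nlinarith [norm_nonneg z1]
    · refine ⟨1/z1, 0, by simpa using hz1ne, ?_⟩
      rw [coe_tri, coe_tri]
      ext x
      simp only [Set.mem_insert_iff, Set.mem_singleton_iff, Set.mem_image]
      constructor
      · rintro (rfl | rfl | rfl)
        · exact ⟨0, Or.inl rfl, by ring⟩
        · exact ⟨z1, Or.inr (Or.inr rfl), by field_simp; ring⟩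
        · exact ⟨1, Or.inr (Or.inl rfl), by ring⟩
      · rintro ⟨p, (rfl | rfl | rfl), rfl⟩
        · left; ring
        · right; right; field_simp; ring
        · right; left; field_simp; ring
  · exact ⟨z1, ⟨him, h1, h2, hc2, hc3⟩, sim1⟩
theorem mem_tri {x a b c : ℂ} : x ∈ tri a b c ↔ x = a ∨ x = b ∨ x = c := by
  unfold tri
  letI := Classical.decEq ℂ
  simp

theorem sim_tri' (p q r α β u v w : ℂ) (hα : α ≠ 0) (h1 : α*p+β = u) (h2 : α*q+β = v)
    (h3 : α*r+β = w) : SimilarCopy (tri p q r) (tri u v w) := by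
  subst h1 h2 h3
  refine ⟨α, β, hα, ?_⟩
  rw [coe_tri, coe_tri, Set.image_insert_eq, Set.image_insert_eq, Set.image_singleton]

/-- A helper: a set with no 3 distinct collinear points satisfies NoMOnLine 3. -/
theorem noM3_of (Q : Finset ℂ)
    (h : ∀ p q r : ℂ, p ∈ Q → q ∈ Q → r ∈ Q → p ≠ q → p ≠ r → q ≠ r →
      ¬ Collinear ℝ ({p, q, r} : Set ℂ)) : NoMOnLine 3 Q := by
  intro S hS hcol
  by_contra hcard
  push_neg at hcard
  have h3 : 3 ≤ S.card := hcard
  obtain ⟨T, hTS, hT3⟩ := Finset.exists_subset_card_eq h3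
  rw [Finset.card_eq_three] at hT3
  obtain ⟨p, q, r, hpq, hpr, hqr, rfl⟩ := hT3
  apply h p q r (hS (hTS (by simp))) (hS (hTS (by simp))) (hS (hTS (by simp))) hpq hpr hqr
  apply hcol.subset
  intro x hx
  rcases hx with rfl | rfl | rfl
  · exact hTS (by simp)
  · exact hTS (by simp)
  · exact hTS (by simp)

section A0sec
variable {z : ℂ} (hz : GoodShape z)

def A0 (z : ℂ) : Finset ℂ :=
  letI := Classical.decEq ℂ
  {0, 1, z, z*z, z*z - z + 1}

theorem mem_A0 {x z : ℂ} : x ∈ A0 z ↔ x = 0 ∨ x = 1 ∨ x = z ∨ x = z*z ∨ x = z*z - z + 1 := by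
  unfold A0
  letI := Classical.decEq ℂ
  simp

-- basic nonzero facts
theorem gs_facts {z : ℂ} (hz : GoodShape z) :
    z ≠ 0 ∧ z ≠ 1 ∧ z*z ≠ 0 ∧ z*z ≠ 1 ∧ z*z ≠ z ∧
    (z*z - z + 1) ≠ 0 ∧ (z*z - z + 1) ≠ 1 ∧ (z*z - z + 1) ≠ z ∧ (z*z - z + 1) ≠ z*z ∧
    (z - 1) ≠ 0 ∧ (1 - z) ≠ 0 := by
  obtain ⟨hy, -, -, hx0, hx2⟩ := hz
  have hz0 : z ≠ 0 := fun h => hy (by rw [h]; simp)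
  have hz1 : z ≠ 1 := fun h => hy (by rw [h]; simp)
  have hzm1 : z ≠ -1 := fun h => hy (by rw [h]; simp)
  have hsub : z - 1 ≠ 0 := sub_ne_zero.mpr hz1
  have hsub' : (1:ℂ) - z ≠ 0 := fun h => hz1 (by linear_combination -h)
  refine ⟨hz0, hz1, mul_ne_zero hz0 hz0, ?_, ?_, ?_, ?_, ?_, ?_, hsub, hsub'⟩
  · intro h
    have : (z-1)*(z+1) = 0 := by linear_combination h
    rcases mul_eq_zero.mp this with h' | h'
    · exact hsub h'
    · exact hzm1 (by linear_combination h')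
  · intro h
    have : z * (z - 1) = 0 := by linear_combination h
    rcases mul_eq_zero.mp this with h' | h' <;> [exact hz0 h'; exact hsub h']
  · -- z*z - z + 1 ≠ 0 : imaginary part is y (2x - 1)
    intro h
    have him : (z*z - z + 1).im = 0 := by rw [h]; simp
    simp only [Complex.add_im, Complex.sub_im, Complex.mul_im, Complex.one_im] at him
    apply hx2
    have h2 : z.im * (2 * z.re - 1) = 0 := by linarith
    rcases mul_eq_zero.mp h2 with h' | h' <;> [exact absurd h' hy; linarith]
  · intro h
    have : z * (z - 1) = 0 := by linear_combination h
    rcases mul_eq_zero.mp this with h' | h' <;> [exact hz0 h'; exact hsub h']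
  · intro h
    have : (z-1)*(z-1) = 0 := by linear_combination h
    exact hsub (mul_self_eq_zero.mp this)
  · intro h
    exact hsub' (by linear_combination h)

theorem A0_card {z : ℂ} (hz : GoodShape z) : (A0 z).card = 5 := by
  obtain ⟨h0, h1, h2, h3, h4, h5, h6, h7, h8, -, -⟩ := gs_facts hz
  have l1 : (0:ℂ) ≠ 1 := by norm_num
  unfold A0
  letI := Classical.decEq ℂ
  rw [Finset.card_insert_of_notMem (by
      simp only [Finset.mem_insert, Finset.mem_singleton]; push_neg
      exact ⟨l1, Ne.symm h0, Ne.symm h2, Ne.symm h5⟩),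
    Finset.card_insert_of_notMem (by
      simp only [Finset.mem_insert, Finset.mem_singleton]; push_neg
      exact ⟨Ne.symm h1, Ne.symm h3, Ne.symm h6⟩),
    Finset.card_insert_of_notMem (by
      simp only [Finset.mem_insert, Finset.mem_singleton]; push_neg
      exact ⟨Ne.symm h4, Ne.symm h7⟩),
    Finset.card_insert_of_notMem (by
      simp only [Finset.mem_singleton]; exact Ne.symm h8),
    Finset.card_singleton]

theorem normSq_ne_one_of_abs {w : ℂ} (h : ‖w‖ ≠ 1) :
    w.re * w.re + w.im * w.im ≠ 1 := by
  intro h1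
  apply h
  rw [Complex.norm_def, Complex.normSq_apply, h1, Real.sqrt_one]

set_option maxHeartbeats 2000000 in
theorem A0_noM3 {z : ℂ} (hz : GoodShape z) : NoMOnLine 3 (A0 z) := by
  have hy : z.im ≠ 0 := hz.him
  have hx0 : z.re ≠ 0 := hz.hre0
  have hx2 : z.re ≠ 1/2 := hz.hre2
  have hs1 : z.re * z.re + z.im * z.im ≠ 1 := normSq_ne_one_of_abs hz.habs
  have hs2 : (z.re - 1) * (z.re - 1) + z.im * z.im ≠ 1 := by
    have := normSq_ne_one_of_abs hz.habs1
    simpa using this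
  have g1 : z.im ≠ 0 := hy
  have g2 : z.im * z.re ≠ 0 := mul_ne_zero hy hx0
  have g3 : z.im * (2*z.re - 1) ≠ 0 := by
    apply mul_ne_zero hy
    intro h; apply hx2; linarith
  have g4 : z.im * (z.re^2 + z.im^2) ≠ 0 := by
    apply mul_ne_zero hy
    intro h; apply hy; nlinarith [sq_nonneg z.re, sq_nonneg z.im]
  have g5 : z.im * (z.re^2 + z.im^2 - 1) ≠ 0 := by
    apply mul_ne_zero hy
    intro h; apply hs1; nlinarith
  have g6 : z.im * (z.re^2 + z.im^2 - 2*z.re) ≠ 0 := by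
    apply mul_ne_zero hy
    intro h; apply hs2; nlinarith
  have g7 : z.im * ((z.re-1)^2 + z.im^2) ≠ 0 := by
    apply mul_ne_zero hy
    intro h; apply hy; nlinarith [sq_nonneg (z.re - 1), sq_nonneg z.im]
  apply noM3_of
  intro p q r hp hq hr hpq hpr hqr
  rcases mem_A0.mp hp with rfl|rfl|rfl|rfl|rfl <;>
  rcases mem_A0.mp hq with rfl|rfl|rfl|rfl|rfl <;>
  rcases mem_A0.mp hr with rfl|rfl|rfl|rfl|rfl <;>
  first
  | exact absurd rfl hpq
  | exact absurd rfl hpr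
  | exact absurd rfl hqr
  | (intro hcol
     rw [collinear_triple_iff (Ne.symm hpq)] at hcol
     simp only [Complex.mul_re, Complex.mul_im, Complex.sub_re, Complex.sub_im,
       Complex.add_re, Complex.add_im, Complex.one_re, Complex.one_im,
       Complex.zero_re, Complex.zero_im, Complex.conj_re, Complex.conj_im] at hcol
     first
     | exact g1 (by linear_combination hcol)
     | exact g1 (by linear_combination -hcol)
     | exact g2 (by linear_combination hcol)
     | exact g2 (by linear_combination -hcol)
     | exact g2 (by linear_combination hcol/2)
     | exact g2 (by linear_combination -hcol/2)
     | exact g3 (by linear_combination hcol)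
     | exact g3 (by linear_combination -hcol)
     | exact g4 (by linear_combination hcol)
     | exact g4 (by linear_combination -hcol)
     | exact g5 (by linear_combination hcol)
     | exact g5 (by linear_combination -hcol)
     | exact g6 (by linear_combination hcol)
     | exact g6 (by linear_combination -hcol)
     | exact g7 (by linear_combination hcol)
     | exact g7 (by linear_combination -hcol))
end A0sec

def copT (z : ℂ) (Q : Finset ℂ) : Finset (Finset ℂ) :=
  letI := Classical.decPred (SimilarCopy (tri 0 1 z))
  Q.powerset.filter (SimilarCopy (tri 0 1 z))

theorem SP_eq_copT (z : ℂ) (Q : Finset ℂ) : SP (tri 0 1 z) Q = (copT z Q).card := rfl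

theorem mem_copT {z : ℂ} {Q S : Finset ℂ} : S ∈ copT z Q ↔ S ⊆ Q ∧ SimilarCopy (tri 0 1 z) S := by
  unfold copT
  letI := Classical.decPred (SimilarCopy (tri 0 1 z))
  rw [Finset.mem_filter, Finset.mem_powerset]

theorem A0_SP {z : ℂ} (hz : GoodShape z) : 4 ≤ (copT z (A0 z)).card := by
  classical
  obtain ⟨h0, h1, h2, h3, h4, h5, h6, h7, h8, h9, h10⟩ := gs_facts hz
  have mm0 : (0:ℂ) ∈ A0 z := mem_A0.mpr (Or.inl rfl)
  have mm1 : (1:ℂ) ∈ A0 z := mem_A0.mpr (Or.inr (Or.inl rfl))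
  have mmz : z ∈ A0 z := mem_A0.mpr (Or.inr (Or.inr (Or.inl rfl)))
  have mmzz : z*z ∈ A0 z := mem_A0.mpr (Or.inr (Or.inr (Or.inr (Or.inl rfl))))
  have mmp : z*z-z+1 ∈ A0 z := mem_A0.mpr (Or.inr (Or.inr (Or.inr (Or.inr rfl))))
  have m1 : tri 0 1 z ∈ copT z (A0 z) := by
    rw [mem_copT]
    exact ⟨fun x hx => by rcases mem_tri.mp hx with rfl|rfl|rfl <;> assumption,
      sim_tri' 0 1 z 1 0 0 1 z one_ne_zero (by ring) (by ring) (by ring)⟩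
  have m2 : tri 0 z (z*z) ∈ copT z (A0 z) := by
    rw [mem_copT]
    exact ⟨fun x hx => by rcases mem_tri.mp hx with rfl|rfl|rfl <;> assumption,
      sim_tri' 0 1 z z 0 0 z (z*z) h0 (by ring) (by ring) (by ring)⟩
  have m3 : tri 1 z (z*z-z+1) ∈ copT z (A0 z) := by
    rw [mem_copT]
    exact ⟨fun x hx => by rcases mem_tri.mp hx with rfl|rfl|rfl <;> assumption,
      sim_tri' 0 1 z (z-1) 1 1 z (z*z-z+1) h9 (by ring) (by ring) (by ring)⟩
  have m4 : tri (z*z) (z*z-z+1) z ∈ copT z (A0 z) := by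
    rw [mem_copT]
    exact ⟨fun x hx => by rcases mem_tri.mp hx with rfl|rfl|rfl <;> assumption,
      sim_tri' 0 1 z (1-z) (z*z) (z*z) (z*z-z+1) z h10 (by ring) (by ring) (by ring)⟩
  have e1 : (1:ℂ) ∈ tri 0 1 z := mem_tri.mpr (Or.inr (Or.inl rfl))
  have e0 : (0:ℂ) ∈ tri 0 1 z := mem_tri.mpr (Or.inl rfl)
  have e02 : (0:ℂ) ∈ tri 0 z (z*z) := mem_tri.mpr (Or.inl rfl)
  have e13 : (1:ℂ) ∈ tri 1 z (z*z-z+1) := mem_tri.mpr (Or.inl rfl)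
  have hz1 : z ≠ 1 := h1
  have hzz1 : z*z ≠ 1 := h3
  have n12 : (1:ℂ) ∉ tri 0 z (z*z) := by
    rw [mem_tri]; push_neg
    exact ⟨by norm_num, Ne.symm hz1, Ne.symm hzz1⟩
  have n03 : (0:ℂ) ∉ tri 1 z (z*z-z+1) := by
    rw [mem_tri]; push_neg
    exact ⟨by norm_num, Ne.symm h0, Ne.symm h5⟩
  have n04 : (0:ℂ) ∉ tri (z*z) (z*z-z+1) z := by
    rw [mem_tri]; push_neg
    exact ⟨Ne.symm h2, Ne.symm h5, Ne.symm h0⟩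
  have n14 : (1:ℂ) ∉ tri (z*z) (z*z-z+1) z := by
    rw [mem_tri]; push_neg
    exact ⟨Ne.symm hzz1, Ne.symm h6, Ne.symm hz1⟩
  have d12 : tri 0 1 z ≠ tri 0 z (z*z) := fun h => n12 (h ▸ e1)
  have d13 : tri 0 1 z ≠ tri 1 z (z*z-z+1) := fun h => n03 (h ▸ e0)
  have d14 : tri 0 1 z ≠ tri (z*z) (z*z-z+1) z := fun h => n04 (h ▸ e0)
  have d23 : tri 0 z (z*z) ≠ tri 1 z (z*z-z+1) := fun h => n03 (h ▸ e02)
  have d24 : tri 0 z (z*z) ≠ tri (z*z) (z*z-z+1) z := fun h => n04 (h ▸ e02)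
  have d34 : tri 1 z (z*z-z+1) ≠ tri (z*z) (z*z-z+1) z := fun h => n14 (h ▸ e13)
  have hsub : ({tri 0 1 z, tri 0 z (z*z), tri 1 z (z*z-z+1), tri (z*z) (z*z-z+1) z} :
      Finset (Finset ℂ)) ⊆ copT z (A0 z) := by
    intro S hS
    simp only [Finset.mem_insert, Finset.mem_singleton] at hS
    rcases hS with rfl|rfl|rfl|rfl <;> assumption
  have hcard : ({tri 0 1 z, tri 0 z (z*z), tri 1 z (z*z-z+1), tri (z*z) (z*z-z+1) z} :
      Finset (Finset ℂ)).card = 4 := by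
    rw [Finset.card_insert_of_notMem (by
        simp only [Finset.mem_insert, Finset.mem_singleton]; push_neg
        exact ⟨d12, d13, d14⟩),
      Finset.card_insert_of_notMem (by
        simp only [Finset.mem_insert, Finset.mem_singleton]; push_neg
        exact ⟨d23, d24⟩),
      Finset.card_insert_of_notMem (by simp only [Finset.mem_singleton]; exact d34),
      Finset.card_singleton]
  calc (4:ℕ) = ({tri 0 1 z, tri 0 z (z*z), tri 1 z (z*z-z+1), tri (z*z) (z*z-z+1) z} :
      Finset (Finset ℂ)).card := hcard.symm
    _ ≤ _ := Finset.card_le_card hsub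
/-- the curve t ↦ t + t² i -/
def lam (t : ℝ) : ℂ := ⟨t, t^2⟩

@[simp] theorem lam_re (t : ℝ) : (lam t).re = t := rfl
@[simp] theorem lam_im (t : ℝ) : (lam t).im = t^2 := rfl

theorem lam_ne_zero {t : ℝ} (ht : t ≠ 0) : lam t ≠ 0 := by
  intro h
  have := congrArg Complex.re h
  simpa [lam] using ht this

theorem finite_of_coeffs (a0 a1 a2 a4 : ℝ) (h : ¬(a0 = 0 ∧ a1 = 0 ∧ a2 = 0 ∧ a4 = 0)) :
    {t : ℝ | a0 + t*a1 + t^2*a2 + t^4*a4 = 0}.Finite := by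
  set P : ℝ[X] := C a0 + C a1 * X + C a2 * X^2 + C a4 * X^4 with hP
  have hPne : P ≠ 0 := by
    intro h0
    apply h
    have c0 : P.coeff 0 = a0 := by simp [hP, coeff_add, coeff_C, coeff_C_mul, coeff_X_pow]
    have c1 : P.coeff 1 = a1 := by simp [hP, coeff_add, coeff_C, coeff_C_mul, coeff_X_pow]
    have c2 : P.coeff 2 = a2 := by simp [hP, coeff_add, coeff_C, coeff_C_mul, coeff_X_pow]
    have c4 : P.coeff 4 = a4 := by simp [hP, coeff_add, coeff_C, coeff_C_mul, coeff_X_pow]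
    rw [h0] at c0 c1 c2 c4
    simp at c0 c1 c2 c4
    exact ⟨c0.symm, c1.symm, c2.symm, c4.symm⟩
  apply (Polynomial.finite_setOf_isRoot hPne).subset
  intro t ht
  simp only [Set.mem_setOf_eq] at ht ⊢
  show P.IsRoot t
  unfold IsRoot
  rw [hP]
  simp only [eval_add, eval_mul, eval_pow, eval_C, eval_X]
  linarith [ht]

/-- expansion of the imaginary part along the curve -/
theorem lam_expand (V U W X : ℂ) (t : ℝ) :
    ((V + lam t * U) * (starRingEnd ℂ) (W + lam t * X)).im =
      (V * (starRingEnd ℂ) W).im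
      + t * ((U * (starRingEnd ℂ) W).im + (V * (starRingEnd ℂ) X).im)
      + t^2 * ((U * (starRingEnd ℂ) W).re - (V * (starRingEnd ℂ) X).re
              + (U * (starRingEnd ℂ) X).im)
      + t^4 * (U * (starRingEnd ℂ) X).im := by
  simp only [Complex.mul_im, Complex.mul_re, Complex.add_re, Complex.add_im,
    Complex.conj_re, Complex.conj_im, lam_re, lam_im]
  ring

theorem mulconj_eq_zero' {V X : ℂ} (him : (V * (starRingEnd ℂ) X).im = 0)
    (hre : (V * (starRingEnd ℂ) X).re = 0) (hX : X ≠ 0) : V = 0 := by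
  have h0 : V * (starRingEnd ℂ) X = 0 := Complex.ext hre him
  rcases mul_eq_zero.mp h0 with h | h
  · exact h
  · exact absurd (by simpa using h) hX

theorem mulconj_eq_zero {V X : ℂ} (him : (V * (starRingEnd ℂ) X).im = 0)
    (hre : (V * (starRingEnd ℂ) X).re = 0) (hV : V ≠ 0) : X = 0 := by
  have h0 : V * (starRingEnd ℂ) X = 0 := Complex.ext hre him
  rcases mul_eq_zero.mp h0 with h | h
  · exact absurd h hV
  · simpa using h

/-- the main finiteness lemma for collinearity degeneracies -/
theorem finite_bad_col {b1 c1 b2 c2 b3 c3 : ℂ}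
    (h12 : (b1, c1) ≠ (b2, c2)) (h13 : (b1, c1) ≠ (b3, c3)) (h23 : (b2, c2) ≠ (b3, c3))
    (hB : b1 ≠ b2 → b1 ≠ b3 → b2 ≠ b3 →
      (((b3 - b1) * (starRingEnd ℂ) (b2 - b1)).im ≠ 0))
    (hA : b1 = b2 → b1 = b3 →
      (((c3 - c1) * (starRingEnd ℂ) (c2 - c1)).im ≠ 0)) :
    {t : ℝ | (((b3 + lam t * c3) - (b1 + lam t * c1)) *
      (starRingEnd ℂ) ((b2 + lam t * c2) - (b1 + lam t * c1))).im = 0}.Finite := by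
  have key : ∀ t : ℝ, ((b3 + lam t * c3) - (b1 + lam t * c1))
      = (b3 - b1) + lam t * (c3 - c1) := fun t => by ring
  have key2 : ∀ t : ℝ, ((b2 + lam t * c2) - (b1 + lam t * c1))
      = (b2 - b1) + lam t * (c2 - c1) := fun t => by ring
  set V : ℂ := b3 - b1 with hVdef
  set U : ℂ := c3 - c1 with hUdef
  set W : ℂ := b2 - b1 with hWdef
  set X : ℂ := c2 - c1 with hXdef
  have hss : {t : ℝ | (((b3 + lam t * c3) - (b1 + lam t * c1)) *
      (starRingEnd ℂ) ((b2 + lam t * c2) - (b1 + lam t * c1))).im = 0}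
      ⊆ {t : ℝ | (V * (starRingEnd ℂ) W).im
      + t * ((U * (starRingEnd ℂ) W).im + (V * (starRingEnd ℂ) X).im)
      + t^2 * ((U * (starRingEnd ℂ) W).re - (V * (starRingEnd ℂ) X).re
              + (U * (starRingEnd ℂ) X).im)
      + t^4 * (U * (starRingEnd ℂ) X).im = 0} := by
    intro t ht
    simp only [Set.mem_setOf_eq] at ht ⊢
    rw [key t, key2 t, lam_expand] at ht
    exact ht
  apply Set.Finite.subset _ hss
  apply finite_of_coeffs
  rintro ⟨e0, e1, e2, e4⟩
  by_cases h12b : b1 = b2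
  · have hW : W = 0 := by rw [hWdef, h12b, sub_self]
    by_cases h13b : b1 = b3
    · exact hA h12b h13b e4
    · -- V ≠ 0, W = 0
      have hV : V ≠ 0 := sub_ne_zero.mpr (fun h => h13b h.symm)
      rw [hW] at e1 e2
      simp only [map_zero, mul_zero, zero_add, Complex.zero_im, Complex.zero_re] at e1 e2
      rw [e4] at e2
      have hX : X = 0 := mulconj_eq_zero e1 (by linarith) hV
      apply h12
      have : c1 = c2 := by
        have := hX
        rw [hXdef] at this
        have h' : c2 = c1 := by linear_combination this
        exact h'.symm
      rw [h12b, this]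
  · by_cases h13b : b1 = b3
    · -- V = 0, W ≠ 0
      have hV : V = 0 := by rw [hVdef, h13b, sub_self]
      have hW : W ≠ 0 := sub_ne_zero.mpr (fun h => h12b h.symm)
      rw [hV] at e1 e2
      simp only [zero_mul, Complex.zero_im, Complex.zero_re, add_zero, sub_zero] at e1 e2
      rw [e4] at e2
      have hU : U = 0 := mulconj_eq_zero' e1 (by linarith) hW
      apply h13
      have : c1 = c3 := by
        rw [hUdef] at hU
        have h' : c3 = c1 := by linear_combination hU
        exact h'.symm
      rw [h13b, this]
    · by_cases h23b : b2 = b3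
      · -- V = W ≠ 0
        have hVW : V = W := by rw [hVdef, hWdef, h23b]
        have hW : W ≠ 0 := sub_ne_zero.mpr (fun h => h12b h.symm)
        have k1 : ((U - X) * (starRingEnd ℂ) W).im
            = (U * (starRingEnd ℂ) W).im + (W * (starRingEnd ℂ) X).im := by
          simp only [Complex.mul_im, Complex.sub_re, Complex.sub_im,
            Complex.conj_re, Complex.conj_im]
          ring
        have k2 : ((U - X) * (starRingEnd ℂ) W).re
            = (U * (starRingEnd ℂ) W).re - (W * (starRingEnd ℂ) X).re := by
          simp only [Complex.mul_re, Complex.sub_re, Complex.sub_im,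
            Complex.conj_re, Complex.conj_im]
          ring
        rw [hVW] at e1 e2
        have hUX : U - X = 0 := by
          apply mulconj_eq_zero' (V := U - X) (X := W) _ _ hW
          · rw [k1]; exact e1
          · rw [k2]; rw [e4] at e2; linarith
        apply h23
        have hc : c2 = c3 := by
          have h' : U = X := sub_eq_zero.mp hUX
          rw [hUdef, hXdef] at h'
          linear_combination -h'
        rw [h23b, hc]
      · exact hB h12b h13b h23b e0

theorem finite_bad_lin {v u : ℂ} (h : u ≠ 0) : {t : ℝ | v + lam t * u = 0}.Finite := by
  have hss : {t : ℝ | v + lam t * u = 0} ⊆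
      {t : ℝ | v.im + t * u.im + t^2 * u.re + t^4 * 0 = 0} := by
    intro t ht
    simp only [Set.mem_setOf_eq] at ht ⊢
    have := congrArg Complex.im ht
    simp only [Complex.add_im, Complex.mul_im, lam_re, lam_im, Complex.zero_im] at this
    linarith
  apply Set.Finite.subset _ hss
  apply finite_of_coeffs
  rintro ⟨-, e1, e2, -⟩
  exact h (Complex.ext e2 e1)

/-- choice of similarity parameters for a copy -/
def simZ (z : ℂ) (S : Finset ℂ) : ℂ :=
  letI := Classical.dec (SimilarCopy (tri 0 1 z) S)
  if h : SimilarCopy (tri 0 1 z) S then h.choose else 1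

def simW (z : ℂ) (S : Finset ℂ) : ℂ :=
  letI := Classical.dec (SimilarCopy (tri 0 1 z) S)
  if h : SimilarCopy (tri 0 1 z) S then h.choose_spec.choose else 0

theorem simZ_ne {z : ℂ} {S : Finset ℂ} (h : SimilarCopy (tri 0 1 z) S) : simZ z S ≠ 0 := by
  unfold simZ
  rw [dif_pos h]
  exact h.choose_spec.choose_spec.1

theorem sim_spec {z : ℂ} {S : Finset ℂ} (h : SimilarCopy (tri 0 1 z) S) :
    (S : Set ℂ) = (fun p => simZ z S * p + simW z S) '' ((tri 0 1 z : Finset ℂ) : Set ℂ) := by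
  unfold simZ simW
  rw [dif_pos h, dif_pos h]
  exact h.choose_spec.choose_spec.2

theorem copy_eq {z : ℂ} {S : Finset ℂ} (h : SimilarCopy (tri 0 1 z) S) :
    S = (tri 0 1 z).image (fun p => simZ z S * p + simW z S) := by
  classical
  apply Finset.coe_injective
  rw [Finset.coe_image]
  exact sim_spec h

theorem tri_card {z : ℂ} (hz : GoodShape z) : (tri 0 1 z).card = 3 := by
  have h0 : z ≠ 0 := fun h => hz.him (by rw [h]; simp)
  have h1 : z ≠ 1 := fun h => hz.him (by rw [h]; simp)
  unfold tri
  letI := Classical.decEq ℂ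
  rw [Finset.card_insert_of_notMem (by
      simp only [Finset.mem_insert, Finset.mem_singleton]; push_neg
      exact ⟨by norm_num, Ne.symm h0⟩),
    Finset.card_insert_of_notMem (by simp only [Finset.mem_singleton]; exact Ne.symm h1),
    Finset.card_singleton]

theorem affine_injOn {α β : ℂ} (hα : α ≠ 0) : Function.Injective (fun p : ℂ => α * p + β) := by
  intro x y h
  simp only at h
  have h2 : α * x = α * y := by
    have := h
    linear_combination this
  exact mul_left_cancel₀ hα h2

theorem copy_card {z : ℂ} (hz : GoodShape z) {S : Finset ℂ} (h : SimilarCopy (tri 0 1 z) S) :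
    S.card = 3 := by
  classical
  rw [copy_eq h, Finset.card_image_of_injective _ (affine_injOn (simZ_ne h)), tri_card hz]


theorem notCol_of_noM3 {Q : Finset ℂ} (h : NoMOnLine 3 Q) {p q r : ℂ}
    (hp : p ∈ Q) (hq : q ∈ Q) (hr : r ∈ Q) (hpq : p ≠ q) (hpr : p ≠ r) (hqr : q ≠ r) :
    ¬ Collinear ℝ ({p, q, r} : Set ℂ) := by
  classical
  intro hcol
  have hsub : ({p, q, r} : Finset ℂ) ⊆ Q := by
    intro x hx
    simp only [Finset.mem_insert, Finset.mem_singleton] at hx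
    rcases hx with rfl|rfl|rfl <;> assumption
  have hcard : ({p, q, r} : Finset ℂ).card = 3 := by
    rw [Finset.card_insert_of_notMem (by
        simp only [Finset.mem_insert, Finset.mem_singleton]; push_neg; exact ⟨hpq, hpr⟩),
      Finset.card_insert_of_notMem (by simp only [Finset.mem_singleton]; exact hqr),
      Finset.card_singleton]
  have := h {p, q, r} hsub (by
    have : (({p, q, r} : Finset ℂ) : Set ℂ) = ({p, q, r} : Set ℂ) := by simp
    rw [this]; exact hcol)
  omega

theorem im_ne_of_notCol {p q r : ℂ} (h : ¬ Collinear ℝ ({p, q, r} : Set ℂ)) (hqp : q ≠ p) :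
    ((r - p) * (starRingEnd ℂ) (q - p)).im ≠ 0 :=
  fun h0 => h ((collinear_triple_iff hqp).mpr h0)

theorem exists_good_t {z : ℂ} (hz : GoodShape z) (B : Finset ℂ) (hB : NoMOnLine 3 B) :
    ∃ t : ℝ, t ≠ 0 ∧
      (∀ e ∈ B ×ˢ A0 z, ∀ e' ∈ B ×ˢ A0 z,
        e.1 + lam t * e.2 = e'.1 + lam t * e'.2 → e = e') ∧
      (∀ e1 ∈ B ×ˢ A0 z, ∀ e2 ∈ B ×ˢ A0 z, ∀ e3 ∈ B ×ˢ A0 z,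
        e1 ≠ e2 → e1 ≠ e3 → e2 ≠ e3 →
        (((e3.1 + lam t * e3.2) - (e1.1 + lam t * e1.2)) *
          (starRingEnd ℂ) ((e2.1 + lam t * e2.2) - (e1.1 + lam t * e1.2))).im ≠ 0) ∧
      (∀ S ∈ copT z B, ∀ R ∈ copT z (A0 z), simZ z S + lam t * simZ z R ≠ 0) := by
  classical
  set P : Finset (ℂ × ℂ) := B ×ˢ A0 z with hP
  set badC : (ℂ × ℂ) → (ℂ × ℂ) → (ℂ × ℂ) → Set ℝ := fun e1 e2 e3 =>
    if e1 ≠ e2 ∧ e1 ≠ e3 ∧ e2 ≠ e3 then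
      {t : ℝ | (((e3.1 + lam t * e3.2) - (e1.1 + lam t * e1.2)) *
        (starRingEnd ℂ) ((e2.1 + lam t * e2.2) - (e1.1 + lam t * e1.2))).im = 0}
    else ∅ with hbadC
  set badI : (ℂ × ℂ) → (ℂ × ℂ) → Set ℝ := fun e e' =>
    if e ≠ e' then {t : ℝ | (e.1 - e'.1) + lam t * (e.2 - e'.2) = 0} else ∅ with hbadI
  set badS : Finset ℂ → Finset ℂ → Set ℝ := fun S R =>
    {t : ℝ | simZ z S + lam t * simZ z R = 0} with hbadS
  have hfinC : ∀ e1 ∈ P, ∀ e2 ∈ P, ∀ e3 ∈ P, (badC e1 e2 e3).Finite := by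
    intro e1 he1 e2 he2 e3 he3
    simp only [hbadC]
    split_ifs with hd
    · obtain ⟨h12, h13, h23⟩ := hd
      rw [hP, Finset.mem_product] at he1 he2 he3
      apply finite_bad_col h12 h13 h23
      · intro hb12 hb13 hb23
        apply im_ne_of_notCol
        · exact notCol_of_noM3 hB he1.1 he2.1 he3.1 hb12 hb13 hb23
        · exact Ne.symm hb12
      · intro hb12 hb13
        have hc12 : e1.2 ≠ e2.2 := by
          intro hc; apply h12; exact Prod.ext hb12 hc
        have hc13 : e1.2 ≠ e3.2 := by
          intro hc; apply h13; exact Prod.ext hb13 hc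
        have hc23 : e2.2 ≠ e3.2 := by
          intro hc; apply h23; exact Prod.ext (hb12 ▸ hb13) hc
        apply im_ne_of_notCol
        · exact notCol_of_noM3 (A0_noM3 hz) he1.2 he2.2 he3.2 hc12 hc13 hc23
        · exact Ne.symm hc12
    · exact Set.finite_empty
  have hfinI : ∀ e ∈ P, ∀ e' ∈ P, (badI e e').Finite := by
    intro e he e' he'
    simp only [hbadI]
    split_ifs with hd
    · by_cases hc : e.2 = e'.2
      · have : {t : ℝ | (e.1 - e'.1) + lam t * (e.2 - e'.2) = 0} = ∅ := by
          ext t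
          simp only [Set.mem_setOf_eq, Set.mem_empty_iff_false, iff_false]
          rw [hc, sub_self, mul_zero, add_zero]
          intro h1
          exact hd (Prod.ext (sub_eq_zero.mp h1) hc)
        rw [this]; exact Set.finite_empty
      · exact finite_bad_lin (sub_ne_zero.mpr hc)
    · exact Set.finite_empty
  have hfinS : ∀ S ∈ copT z B, ∀ R ∈ copT z (A0 z), (badS S R).Finite := by
    intro S hS R hR
    exact finite_bad_lin (simZ_ne (mem_copT.mp hR).2)
  set BAD : Set ℝ := {0} ∪ ((⋃ e1 ∈ P, ⋃ e2 ∈ P, ⋃ e3 ∈ P, badC e1 e2 e3)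
    ∪ (⋃ e ∈ P, ⋃ e' ∈ P, badI e e')
    ∪ (⋃ S ∈ copT z B, ⋃ R ∈ copT z (A0 z), badS S R)) with hBAD
  have hfin : BAD.Finite := by
    rw [hBAD]
    apply Set.Finite.union (Set.finite_singleton 0)
    apply Set.Finite.union
    apply Set.Finite.union
    · exact P.finite_toSet.biUnion fun e1 he1 => P.finite_toSet.biUnion fun e2 he2 =>
        P.finite_toSet.biUnion fun e3 he3 => hfinC e1 he1 e2 he2 e3 he3
    · exact P.finite_toSet.biUnion fun e he => P.finite_toSet.biUnion fun e' he' =>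
        hfinI e he e' he'
    · exact (copT z B).finite_toSet.biUnion fun S hS =>
        (copT z (A0 z)).finite_toSet.biUnion fun R hR => hfinS S hS R hR
  obtain ⟨t, ht⟩ := hfin.infinite_compl.nonempty
  rw [Set.mem_compl_iff, hBAD] at ht
  simp only [Set.mem_union, Set.mem_singleton_iff, not_or] at ht
  obtain ⟨ht0, ⟨htC, htI⟩, htS⟩ := ht
  refine ⟨t, ht0, ?_, ?_, ?_⟩
  · intro e he e' he' heq
    by_contra hne
    apply htI
    rw [Set.mem_iUnion₂]
    refine ⟨e, he, ?_⟩
    rw [Set.mem_iUnion₂]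
    refine ⟨e', he', ?_⟩
    simp only [hbadI]
    rw [if_pos hne]
    show (e.1 - e'.1) + lam t * (e.2 - e'.2) = 0
    linear_combination heq
  · intro e1 he1 e2 he2 e3 he3 h12 h13 h23
    intro h0
    apply htC
    rw [Set.mem_iUnion₂]
    refine ⟨e1, he1, ?_⟩
    rw [Set.mem_iUnion₂]
    refine ⟨e2, he2, ?_⟩
    rw [Set.mem_iUnion₂]
    refine ⟨e3, he3, ?_⟩
    simp only [hbadC]
    rw [if_pos ⟨h12, h13, h23⟩]
    exact h0
  · intro S hS R hR h0
    apply htS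
    rw [Set.mem_iUnion₂]
    refine ⟨S, hS, ?_⟩
    rw [Set.mem_iUnion₂]
    refine ⟨R, hR, ?_⟩
    exact h0

theorem step {z : ℂ} (hz : GoodShape z) (B : Finset ℂ) (hB3 : NoMOnLine 3 B) :
    ∃ B' : Finset ℂ, B'.card = 5 * B.card ∧ NoMOnLine 3 B' ∧
      9 * (copT z B).card + 4 * B.card ≤ (copT z B').card := by
  classical
  obtain ⟨t, ht0, hinj, hcol, hscale⟩ := exists_good_t hz B hB3
  set T : Finset ℂ := tri 0 1 z with hT
  set A : Finset ℂ := A0 z with hA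
  set P : Finset (ℂ × ℂ) := B ×ˢ A with hPdef
  set g : ℂ × ℂ → ℂ := fun e => e.1 + lam t * e.2 with hg
  set B' : Finset ℂ := P.image g with hB'
  have hTne : T.Nonempty := ⟨0, by rw [hT]; exact mem_tri.mpr (Or.inl rfl)⟩
  have hginj : ∀ e ∈ P, ∀ e' ∈ P, g e = g e' → e = e' := hinj
  -- cancellation of images
  have cancel : ∀ V W : Finset (ℂ × ℂ), V ⊆ P → W ⊆ P → V.image g = W.image g → V = W := by
    intro V W hV hW h
    ext e
    constructor
    · intro he
      have : g e ∈ W.image g := by rw [← h]; exact Finset.mem_image_of_mem g he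
      obtain ⟨e', he', heq⟩ := Finset.mem_image.mp this
      rwa [hginj e' (hW he') e (hV he) heq] at he'
    · intro he
      have : g e ∈ V.image g := by rw [h]; exact Finset.mem_image_of_mem g he
      obtain ⟨e', he', heq⟩ := Finset.mem_image.mp this
      rwa [hginj e' (hV he') e (hW he) heq] at he'
  -- card of B'
  have hcardB' : B'.card = 5 * B.card := by
    rw [hB', Finset.card_image_of_injOn (fun e he e' he' h => hginj e he e' he' h),
      hPdef, Finset.card_product, hA, A0_card hz]
    ring
  -- no 3 on a line
  have hB'3 : NoMOnLine 3 B' := by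
    apply noM3_of
    intro p q r hp hq hr hpq hpr hqr
    obtain ⟨e1, he1, rfl⟩ := Finset.mem_image.mp hp
    obtain ⟨e2, he2, rfl⟩ := Finset.mem_image.mp hq
    obtain ⟨e3, he3, rfl⟩ := Finset.mem_image.mp hr
    intro hcl
    have h12 : e1 ≠ e2 := fun h => hpq (by rw [h])
    have h13 : e1 ≠ e3 := fun h => hpr (by rw [h])
    have h23 : e2 ≠ e3 := fun h => hqr (by rw [h])
    have := hcol e1 he1 e2 he2 e3 he3 h12 h13 h23
    apply this
    rw [← collinear_triple_iff (show g e2 ≠ g e1 from fun h =>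
      h12 (hginj e2 he2 e1 he1 h).symm)]
    exact hcl
  -- pair maps
  set pm1 : Finset ℂ × Finset ℂ → Finset (ℂ × ℂ) := fun SR =>
    T.image (fun x => (simZ z SR.1 * x + simW z SR.1, simZ z SR.2 * x + simW z SR.2)) with hpm1
  set pm2 : Finset ℂ × ℂ → Finset (ℂ × ℂ) := fun Sc =>
    T.image (fun x => (simZ z Sc.1 * x + simW z Sc.1, Sc.2)) with hpm2
  set pm3 : ℂ × Finset ℂ → Finset (ℂ × ℂ) := fun bR =>
    T.image (fun x => (bR.1, simZ z bR.2 * x + simW z bR.2)) with hpm3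
  set mk1 : Finset ℂ × Finset ℂ → Finset ℂ := fun SR => (pm1 SR).image g with hmk1
  set mk2 : Finset ℂ × ℂ → Finset ℂ := fun Sc => (pm2 Sc).image g with hmk2
  set mk3 : ℂ × Finset ℂ → Finset ℂ := fun bR => (pm3 bR).image g with hmk3
  -- recovery of copies from triangle images
  have recovB : ∀ S ∈ copT z B, T.image (fun x => simZ z S * x + simW z S) = S :=
    fun S hS => (copy_eq (mem_copT.mp hS).2).symm
  have recovA : ∀ R ∈ copT z A, T.image (fun x => simZ z R * x + simW z R) = R :=
    fun R hR => (copy_eq (mem_copT.mp hR).2).symm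
  have card3B : ∀ S ∈ copT z B, S.card = 3 := fun S hS => copy_card hz (mem_copT.mp hS).2
  have card3A : ∀ R ∈ copT z A, R.card = 3 := fun R hR => copy_card hz (mem_copT.mp hR).2
  -- pm subsets of P
  have pm1P : ∀ S ∈ copT z B, ∀ R ∈ copT z A, pm1 (S, R) ⊆ P := by
    intro S hS R hR e he
    simp only [hpm1] at he
    obtain ⟨x, hx, rfl⟩ := Finset.mem_image.mp he
    rw [hPdef, Finset.mem_product]
    constructor
    · apply (mem_copT.mp hS).1
      have h2 := Finset.mem_image_of_mem (fun x => simZ z S * x + simW z S) hx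
      rwa [recovB S hS] at h2
    · apply (mem_copT.mp hR).1
      have h2 := Finset.mem_image_of_mem (fun x => simZ z R * x + simW z R) hx
      rwa [recovA R hR] at h2
  have pm2P : ∀ S ∈ copT z B, ∀ c ∈ A, pm2 (S, c) ⊆ P := by
    intro S hS c hc e he
    simp only [hpm2] at he
    obtain ⟨x, hx, rfl⟩ := Finset.mem_image.mp he
    rw [hPdef, Finset.mem_product]
    refine ⟨?_, hc⟩
    apply (mem_copT.mp hS).1
    have h2 := Finset.mem_image_of_mem (fun x => simZ z S * x + simW z S) hx
    rwa [recovB S hS] at h2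
  have pm3P : ∀ b ∈ B, ∀ R ∈ copT z A, pm3 (b, R) ⊆ P := by
    intro b hb R hR e he
    simp only [hpm3] at he
    obtain ⟨x, hx, rfl⟩ := Finset.mem_image.mp he
    rw [hPdef, Finset.mem_product]
    refine ⟨hb, ?_⟩
    apply (mem_copT.mp hR).1
    have h2 := Finset.mem_image_of_mem (fun x => simZ z R * x + simW z R) hx
    rwa [recovA R hR] at h2
  -- projections
  have projf : ∀ (f h : ℂ → ℂ), (T.image (fun x => (f x, h x))).image Prod.fst = T.image f := by
    intro f h
    rw [Finset.image_image]
    rfl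
  have projs : ∀ (f h : ℂ → ℂ), (T.image (fun x => (f x, h x))).image Prod.snd = T.image h := by
    intro f h
    rw [Finset.image_image]
    rfl
  have imconst : ∀ c : ℂ, T.image (fun _ => c) = {c} := fun c => Finset.image_const hTne c
  -- the three copy families
  set U1 : Finset (Finset ℂ) := ((copT z B) ×ˢ (copT z A)).image mk1 with hU1
  set U2 : Finset (Finset ℂ) := ((copT z B) ×ˢ A).image mk2 with hU2
  set U3 : Finset (Finset ℂ) := (B ×ˢ (copT z A)).image mk3 with hU3
  -- combined forms
  have comb1 : ∀ SR : Finset ℂ × Finset ℂ, mk1 SR = T.image (fun x =>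
      (simZ z SR.1 + lam t * simZ z SR.2) * x + (simW z SR.1 + lam t * simW z SR.2)) := by
    intro SR
    rw [hmk1]
    dsimp only
    rw [hpm1]
    dsimp only
    rw [Finset.image_image]
    apply Finset.image_congr
    intro x hx
    simp only [Function.comp, hg]
    ring
  have comb2 : ∀ Sc : Finset ℂ × ℂ, mk2 Sc = T.image (fun x =>
      simZ z Sc.1 * x + (simW z Sc.1 + lam t * Sc.2)) := by
    intro Sc
    rw [hmk2]
    dsimp only
    rw [hpm2]
    dsimp only
    rw [Finset.image_image]
    apply Finset.image_congr
    intro x hx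
    simp only [Function.comp, hg]
    ring
  have comb3 : ∀ bR : ℂ × Finset ℂ, mk3 bR = T.image (fun x =>
      (lam t * simZ z bR.2) * x + (bR.1 + lam t * simW z bR.2)) := by
    intro bR
    rw [hmk3]
    dsimp only
    rw [hpm3]
    dsimp only
    rw [Finset.image_image]
    apply Finset.image_congr
    intro x hx
    simp only [Function.comp, hg]
    ring
  -- memberships
  have hU1sub : U1 ⊆ copT z B' := by
    intro u hu
    obtain ⟨SR, hSR, rfl⟩ := Finset.mem_image.mp hu
    obtain ⟨hS, hR⟩ := Finset.mem_product.mp hSR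
    rw [mem_copT]
    constructor
    · rw [hmk1]
      dsimp only
      intro x hx
      obtain ⟨e, he, rfl⟩ := Finset.mem_image.mp hx
      rw [hB']
      exact Finset.mem_image_of_mem g (pm1P SR.1 hS SR.2 hR he)
    · exact ⟨simZ z SR.1 + lam t * simZ z SR.2, simW z SR.1 + lam t * simW z SR.2,
        hscale SR.1 hS SR.2 hR, by rw [comb1 SR, Finset.coe_image]⟩
  have hU2sub : U2 ⊆ copT z B' := by
    intro u hu
    obtain ⟨Sc, hSc, rfl⟩ := Finset.mem_image.mp hu
    obtain ⟨hS, hc⟩ := Finset.mem_product.mp hSc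
    rw [mem_copT]
    constructor
    · rw [hmk2]
      dsimp only
      intro x hx
      obtain ⟨e, he, rfl⟩ := Finset.mem_image.mp hx
      rw [hB']
      exact Finset.mem_image_of_mem g (pm2P Sc.1 hS Sc.2 hc he)
    · exact ⟨simZ z Sc.1, simW z Sc.1 + lam t * Sc.2,
        simZ_ne (mem_copT.mp hS).2, by rw [comb2 Sc, Finset.coe_image]⟩
  have hU3sub : U3 ⊆ copT z B' := by
    intro u hu
    obtain ⟨bR, hbR, rfl⟩ := Finset.mem_image.mp hu
    obtain ⟨hb, hR⟩ := Finset.mem_product.mp hbR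
    rw [mem_copT]
    constructor
    · rw [hmk3]
      dsimp only
      intro x hx
      obtain ⟨e, he, rfl⟩ := Finset.mem_image.mp hx
      rw [hB']
      exact Finset.mem_image_of_mem g (pm3P bR.1 hb bR.2 hR he)
    · exact ⟨lam t * simZ z bR.2, bR.1 + lam t * simW z bR.2,
        mul_ne_zero (lam_ne_zero ht0) (simZ_ne (mem_copT.mp hR).2),
        by rw [comb3 bR, Finset.coe_image]⟩
  -- projections of pair maps
  have p1f : ∀ S R : Finset ℂ, (pm1 (S, R)).image Prod.fst
      = T.image (fun x => simZ z S * x + simW z S) := by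
    intro S R
    rw [hpm1]
    exact projf _ _
  have p1s : ∀ S R : Finset ℂ, (pm1 (S, R)).image Prod.snd
      = T.image (fun x => simZ z R * x + simW z R) := by
    intro S R
    rw [hpm1]
    exact projs _ _
  have p2f : ∀ (S : Finset ℂ) (c : ℂ), (pm2 (S, c)).image Prod.fst
      = T.image (fun x => simZ z S * x + simW z S) := by
    intro S c
    rw [hpm2]
    exact projf _ _
  have p2s : ∀ (S : Finset ℂ) (c : ℂ), (pm2 (S, c)).image Prod.snd = {c} := by
    intro S c
    rw [hpm2]
    rw [projs]
    exact imconst c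
  have p3f : ∀ (b : ℂ) (R : Finset ℂ), (pm3 (b, R)).image Prod.fst = {b} := by
    intro b R
    rw [hpm3]
    rw [projf]
    exact imconst b
  have p3s : ∀ (b : ℂ) (R : Finset ℂ), (pm3 (b, R)).image Prod.snd
      = T.image (fun x => simZ z R * x + simW z R) := by
    intro b R
    rw [hpm3]
    exact projs _ _
  -- injectivity of the families
  have inj1 : ∀ SR ∈ (copT z B) ×ˢ (copT z A), ∀ SR' ∈ (copT z B) ×ˢ (copT z A),
      mk1 SR = mk1 SR' → SR = SR' := by
    rintro ⟨S, R⟩ h ⟨S', R'⟩ h' heq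
    obtain ⟨hS, hR⟩ := Finset.mem_product.mp h
    obtain ⟨hS', hR'⟩ := Finset.mem_product.mp h'
    have hpm : pm1 (S, R) = pm1 (S', R') :=
      cancel _ _ (pm1P S hS R hR) (pm1P S' hS' R' hR') heq
    have h1 : S = S' := by
      have h2 := congrArg (Finset.image Prod.fst) hpm
      rw [p1f, p1f, recovB S hS, recovB S' hS'] at h2
      exact h2
    have h2 : R = R' := by
      have h2 := congrArg (Finset.image Prod.snd) hpm
      rw [p1s, p1s, recovA R hR, recovA R' hR'] at h2
      exact h2
    rw [h1, h2]
  have inj2 : ∀ Sc ∈ (copT z B) ×ˢ A, ∀ Sc' ∈ (copT z B) ×ˢ A,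
      mk2 Sc = mk2 Sc' → Sc = Sc' := by
    rintro ⟨S, c⟩ h ⟨S', c'⟩ h' heq
    obtain ⟨hS, hc⟩ := Finset.mem_product.mp h
    obtain ⟨hS', hc'⟩ := Finset.mem_product.mp h'
    have hpm : pm2 (S, c) = pm2 (S', c') :=
      cancel _ _ (pm2P S hS c hc) (pm2P S' hS' c' hc') heq
    have h1 : S = S' := by
      have h2 := congrArg (Finset.image Prod.fst) hpm
      rw [p2f, p2f, recovB S hS, recovB S' hS'] at h2
      exact h2
    have h2 : c = c' := by
      have h2 := congrArg (Finset.image Prod.snd) hpm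
      rw [p2s, p2s] at h2
      exact Finset.singleton_injective h2
    rw [h1, h2]
  have inj3 : ∀ bR ∈ B ×ˢ (copT z A), ∀ bR' ∈ B ×ˢ (copT z A),
      mk3 bR = mk3 bR' → bR = bR' := by
    rintro ⟨b, R⟩ h ⟨b', R'⟩ h' heq
    obtain ⟨hb, hR⟩ := Finset.mem_product.mp h
    obtain ⟨hb', hR'⟩ := Finset.mem_product.mp h'
    have hpm : pm3 (b, R) = pm3 (b', R') :=
      cancel _ _ (pm3P b hb R hR) (pm3P b' hb' R' hR') heq
    have h1 : b = b' := by
      have h2 := congrArg (Finset.image Prod.fst) hpm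
      rw [p3f, p3f] at h2
      exact Finset.singleton_injective h2
    have h2 : R = R' := by
      have h2 := congrArg (Finset.image Prod.snd) hpm
      rw [p3s, p3s, recovA R hR, recovA R' hR'] at h2
      exact h2
    rw [h1, h2]
  -- disjointness
  have hd12 : Disjoint U1 U2 := by
    rw [Finset.disjoint_left]
    intro u hu1 hu2
    obtain ⟨SR, hSR, rfl⟩ := Finset.mem_image.mp hu1
    obtain ⟨hS, hR⟩ := Finset.mem_product.mp hSR
    obtain ⟨Sc, hSc, heq⟩ := Finset.mem_image.mp hu2
    obtain ⟨hS', hc'⟩ := Finset.mem_product.mp hSc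
    have hpm : pm2 Sc = pm1 SR := by
      apply cancel _ _ (pm2P Sc.1 hS' Sc.2 hc') (pm1P SR.1 hS SR.2 hR)
      exact heq
    have h2 := congrArg (Finset.image Prod.snd) hpm
    rw [show Sc = (Sc.1, Sc.2) from rfl] at h2
    rw [show SR = (SR.1, SR.2) from rfl] at h2
    rw [p2s, p1s, recovA SR.2 hR] at h2
    have := card3A SR.2 hR
    rw [← h2] at this
    simp at this
  have hd13 : Disjoint U1 U3 := by
    rw [Finset.disjoint_left]
    intro u hu1 hu3
    obtain ⟨SR, hSR, rfl⟩ := Finset.mem_image.mp hu1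
    obtain ⟨hS, hR⟩ := Finset.mem_product.mp hSR
    obtain ⟨bR, hbR, heq⟩ := Finset.mem_image.mp hu3
    obtain ⟨hb', hR'⟩ := Finset.mem_product.mp hbR
    have hpm : pm3 bR = pm1 SR := by
      apply cancel _ _ (pm3P bR.1 hb' bR.2 hR') (pm1P SR.1 hS SR.2 hR)
      exact heq
    have h2 := congrArg (Finset.image Prod.fst) hpm
    rw [show bR = (bR.1, bR.2) from rfl] at h2
    rw [show SR = (SR.1, SR.2) from rfl] at h2
    rw [p3f, p1f, recovB SR.1 hS] at h2
    have := card3B SR.1 hS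
    rw [← h2] at this
    simp at this
  have hd23 : Disjoint U2 U3 := by
    rw [Finset.disjoint_left]
    intro u hu2 hu3
    obtain ⟨Sc, hSc, rfl⟩ := Finset.mem_image.mp hu2
    obtain ⟨hS, hc⟩ := Finset.mem_product.mp hSc
    obtain ⟨bR, hbR, heq⟩ := Finset.mem_image.mp hu3
    obtain ⟨hb', hR'⟩ := Finset.mem_product.mp hbR
    have hpm : pm3 bR = pm2 Sc := by
      apply cancel _ _ (pm3P bR.1 hb' bR.2 hR') (pm2P Sc.1 hS Sc.2 hc)
      exact heq
    have h2 := congrArg (Finset.image Prod.fst) hpm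
    rw [show bR = (bR.1, bR.2) from rfl] at h2
    rw [show Sc = (Sc.1, Sc.2) from rfl] at h2
    rw [p3f, p2f, recovB Sc.1 hS] at h2
    have := card3B Sc.1 hS
    rw [← h2] at this
    simp at this
  -- cardinalities
  have cU1 : U1.card = (copT z B).card * (copT z A).card := by
    rw [hU1, Finset.card_image_of_injOn (fun a ha b hb h => inj1 a ha b hb h),
      Finset.card_product]
  have cU2 : U2.card = (copT z B).card * 5 := by
    rw [hU2, Finset.card_image_of_injOn (fun a ha b hb h => inj2 a ha b hb h),
      Finset.card_product, hA, A0_card hz]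
  have cU3 : U3.card = B.card * (copT z A).card := by
    rw [hU3, Finset.card_image_of_injOn (fun a ha b hb h => inj3 a ha b hb h),
      Finset.card_product]
  have hsA : 4 ≤ (copT z A).card := by rw [hA]; exact A0_SP hz
  have hunion : (U1 ∪ U2 ∪ U3).card = U1.card + U2.card + U3.card := by
    rw [Finset.card_union_of_disjoint (by
        rw [Finset.disjoint_union_left]; exact ⟨hd13, hd23⟩),
      Finset.card_union_of_disjoint hd12]
  have hsubU : U1 ∪ U2 ∪ U3 ⊆ copT z B' := by
    intro u hu
    rcases Finset.mem_union.mp hu with hu | hu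
    · rcases Finset.mem_union.mp hu with hu | hu
      · exact hU1sub hu
      · exact hU2sub hu
    · exact hU3sub hu
  refine ⟨B', hcardB', hB'3, ?_⟩
  calc 9 * (copT z B).card + 4 * B.card
      = (copT z B).card * 4 + (copT z B).card * 5 + B.card * 4 := by ring
    _ ≤ (copT z B).card * (copT z A).card + (copT z B).card * 5
        + B.card * (copT z A).card := by
        have m1 := Nat.mul_le_mul_left (copT z B).card hsA
        have m2 := Nat.mul_le_mul_left B.card hsA
        omega
    _ = U1.card + U2.card + U3.card := by rw [cU1, cU2, cU3]
    _ = (U1 ∪ U2 ∪ U3).card := hunion.symm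
    _ ≤ (copT z B').card := Finset.card_le_card hsubU

theorem finite_bad_new {b b' : ℂ} (h : b ≠ b') :
    {t : ℝ | ((lam t - b) * (starRingEnd ℂ) (b' - b)).im = 0}.Finite := by
  have key : ∀ t : ℝ, lam t - b = (-b) + lam t * 1 := fun t => by ring
  have key2 : ∀ t : ℝ, b' - b = (b' - b) + lam t * 0 := fun t => by ring
  have hss : {t : ℝ | ((lam t - b) * (starRingEnd ℂ) (b' - b)).im = 0} ⊆
      {t : ℝ | ((-b) * (starRingEnd ℂ) (b' - b)).im
      + t * (((1:ℂ) * (starRingEnd ℂ) (b' - b)).im + ((-b) * (starRingEnd ℂ) (0:ℂ)).im)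
      + t^2 * (((1:ℂ) * (starRingEnd ℂ) (b' - b)).re - ((-b) * (starRingEnd ℂ) (0:ℂ)).re
              + ((1:ℂ) * (starRingEnd ℂ) (0:ℂ)).im)
      + t^4 * ((1:ℂ) * (starRingEnd ℂ) (0:ℂ)).im = 0} := by
    intro t ht
    simp only [Set.mem_setOf_eq] at ht ⊢
    rw [← lam_expand]
    rw [key t, key2 t] at ht
    exact ht
  apply Set.Finite.subset _ hss
  apply finite_of_coeffs
  rintro ⟨-, e1, e2, -⟩
  simp only [one_mul, map_zero, mul_zero, Complex.zero_im, add_zero, Complex.zero_re,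
    sub_zero] at e1 e2
  apply h
  have h1 : (b' - b).im = 0 := by
    have h1' : -b'.im + b.im = 0 := by simpa using e1
    simp only [Complex.sub_im]
    linarith
  have h2 : (b' - b).re = 0 := by simpa using e2
  exact (sub_eq_zero.mp (Complex.ext h2 h1)).symm

theorem extend1 {Q : Finset ℂ} (hQ : NoMOnLine 3 Q) :
    ∃ w : ℂ, w ∉ Q ∧ NoMOnLine 3 (insert w Q) := by
  classical
  set badP : ℂ → Set ℝ := fun q => {t : ℝ | (-q) + lam t * 1 = 0} with hbadP
  set badL : ℂ → ℂ → Set ℝ := fun b b' =>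
    if b ≠ b' then {t : ℝ | ((lam t - b) * (starRingEnd ℂ) (b' - b)).im = 0} else ∅ with hbadL
  have hfinP : ∀ q ∈ Q, (badP q).Finite := fun q _ => finite_bad_lin one_ne_zero
  have hfinL : ∀ b ∈ Q, ∀ b' ∈ Q, (badL b b').Finite := by
    intro b _ b' _
    simp only [hbadL]
    split_ifs with hd
    · exact finite_bad_new hd
    · exact Set.finite_empty
  have hfin : ((⋃ q ∈ Q, badP q) ∪ (⋃ b ∈ Q, ⋃ b' ∈ Q, badL b b')).Finite := by
    apply Set.Finite.union
    · exact Q.finite_toSet.biUnion hfinP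
    · exact Q.finite_toSet.biUnion fun b hb => Q.finite_toSet.biUnion fun b' hb' =>
        hfinL b hb b' hb'
  obtain ⟨t, ht⟩ := hfin.infinite_compl.nonempty
  rw [Set.mem_compl_iff] at ht
  simp only [Set.mem_union, not_or] at ht
  obtain ⟨htP, htL⟩ := ht
  have hwQ : lam t ∉ Q := by
    intro hmem
    apply htP
    rw [Set.mem_iUnion₂]
    refine ⟨lam t, hmem, ?_⟩
    simp only [hbadP]
    show -(lam t) + lam t * 1 = 0
    ring
  have hG : ∀ b ∈ Q, ∀ b' ∈ Q, b ≠ b' →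
      ((lam t - b) * (starRingEnd ℂ) (b' - b)).im ≠ 0 := by
    intro b hb b' hb' hne h0
    apply htL
    rw [Set.mem_iUnion₂]
    refine ⟨b, hb, ?_⟩
    rw [Set.mem_iUnion₂]
    refine ⟨b', hb', ?_⟩
    simp only [hbadL]
    rw [if_pos hne]
    exact h0
  refine ⟨lam t, hwQ, ?_⟩
  apply noM3_of
  intro p q r hp hq hr hpq hpr hqr hcl
  rw [collinear_triple_iff (Ne.symm hpq)] at hcl
  rcases Finset.mem_insert.mp hp with rfl | hp' <;>
  rcases Finset.mem_insert.mp hq with rfl | hq' <;>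
  rcases Finset.mem_insert.mp hr with rfl | hr'
  · exact hpq rfl
  · exact hpq rfl
  · exact hpr rfl
  · -- p = w, q r ∈ Q
    apply hG q hq' r hr' hqr
    simp only [Complex.mul_im, Complex.sub_re, Complex.sub_im, Complex.conj_re,
      Complex.conj_im] at hcl ⊢
    first | linear_combination hcl | linear_combination -hcl
  · exact hqr rfl
  · -- q = w
    apply hG p hp' r hr' hpr
    simp only [Complex.mul_im, Complex.sub_re, Complex.sub_im, Complex.conj_re,
      Complex.conj_im] at hcl ⊢
    first | linear_combination hcl | linear_combination -hcl
  · -- r = w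
    apply hG p hp' q hq' hpq
    simp only [Complex.mul_im, Complex.sub_re, Complex.sub_im, Complex.conj_re,
      Complex.conj_im] at hcl ⊢
    first | linear_combination hcl | linear_combination -hcl
  · -- all in Q
    exact notCol_of_noM3 hQ hp' hq' hr' hpq hpr hqr
      ((collinear_triple_iff (Ne.symm hpq)).mpr hcl)

theorem extendMany (Q : Finset ℂ) (hQ : NoMOnLine 3 Q) (m : ℕ) :
    ∃ Q' : Finset ℂ, Q ⊆ Q' ∧ Q'.card = Q.card + m ∧ NoMOnLine 3 Q' := by
  classical
  induction m with
  | zero => exact ⟨Q, le_refl _, rfl, hQ⟩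
  | succ m ih =>
    obtain ⟨Q', hsub, hcard, hQ'⟩ := ih
    obtain ⟨w, hw, hQ''⟩ := extend1 hQ'
    refine ⟨insert w Q', hsub.trans (Finset.subset_insert w Q'), ?_, hQ''⟩
    rw [Finset.card_insert_of_notMem hw, hcard]
    omega

theorem iter {z : ℂ} (hz : GoodShape z) (k : ℕ) :
    ∃ B : Finset ℂ, B.card = 5^(k+1) ∧ NoMOnLine 3 B ∧
      9^(k+1) ≤ (copT z B).card + 5^(k+1) := by
  induction k with
  | zero =>
    refine ⟨A0 z, by rw [A0_card hz]; norm_num, A0_noM3 hz, ?_⟩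
    have := A0_SP hz
    omega
  | succ k ih =>
    obtain ⟨B, hcard, hB3, hcount⟩ := ih
    obtain ⟨B', hcard', hB'3, hcount'⟩ := step hz B hB3
    refine ⟨B', by rw [hcard', hcard]; ring, hB'3, ?_⟩
    have h9 : 9^(k+1+1) = 9 * 9^(k+1) := by ring
    have h5 : (5:ℕ)^(k+1+1) = 5 * 5^(k+1) := by ring
    have hm : 9 * 9^(k+1) ≤ 9 * ((copT z B).card + 5^(k+1)) :=
      Nat.mul_le_mul_left 9 hcount
    rw [hcard] at hcount'
    rw [h9, h5]
    omega

theorem le_SPnm (P : Finset ℂ) (n : ℕ) (Q : Finset ℂ) (hcard : Q.card = n)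
    (hQ : NoMOnLine 3 Q) : SP P Q ≤ SPnm P n 3 := by
  classical
  apply le_csSup
  · refine ⟨2^n, ?_⟩
    rintro k ⟨Q', hQ'card, hQ'3, rfl⟩
    calc SP P Q' ≤ Q'.powerset.card := by
          unfold SP
          exact Finset.card_le_card (Finset.filter_subset _ _)
      _ = 2^n := by rw [Finset.card_powerset, hQ'card]
  · exact ⟨Q, hcard, hQ, rfl⟩

theorem copT_mono {z : ℂ} {Q Q' : Finset ℂ} (h : Q ⊆ Q') :
    (copT z Q).card ≤ (copT z Q').card := by
  rw [← SP_eq_copT, ← SP_eq_copT]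
  exact SP_mono h

theorem two_five_le_nine (m : ℕ) (hm : 2 ≤ m) : 2 * 5^m ≤ 9^m := by
  induction m with
  | zero => omega
  | succ m ih =>
    rcases Nat.lt_or_ge m 2 with h | h
    · interval_cases m
      · omega
      · norm_num
    · have := ih h
      have h5 : (5:ℕ)^(m+1) = 5 * 5^m := by ring
      have h9 : (9:ℕ)^(m+1) = 9 * 9^m := by ring
      rw [h5, h9]
      omega

/-- For any scalene triangle `T` (three non-collinear points whose three pairwise
distances are pairwise distinct), `S_T(n, 3) ≥ c·n^{log 9 / log 5}` for some `c > 0`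
and all large `n`. -/
theorem stmt8 (a b c : ℂ) (hncol : ¬ Collinear ℝ ({a, b, c} : Set ℂ))
    (hsc : dist a b ≠ dist a c ∧ dist a b ≠ dist b c ∧ dist a c ≠ dist b c) :
    ∃ C : ℝ, 0 < C ∧ ∃ N : ℕ, ∀ n : ℕ, N ≤ n →
      C * (n : ℝ) ^ (Real.log 9 / Real.log 5) ≤ (SPnm (tri a b c) n 3 : ℝ) := by
  obtain ⟨z, hz, hsim⟩ := exists_goodshape a b c hncol hsc
  refine ⟨1/18, by norm_num, 25, ?_⟩
  intro n hn
  set α : ℝ := Real.log 9 / Real.log 5 with hαdef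
  have hα0 : 0 ≤ α := by
    apply div_nonneg
    · exact Real.log_nonneg (by norm_num)
    · exact Real.log_nonneg (by norm_num)
  set m : ℕ := Nat.log 5 n with hm
  have hn0 : n ≠ 0 := by omega
  have hm2 : 2 ≤ m := by
    rw [hm, Nat.le_log_iff_pow_le (by norm_num) hn0]
    calc 5^2 = 25 := by norm_num
      _ ≤ n := hn
  have h5m : 5^m ≤ n := Nat.pow_log_le_self 5 hn0
  have hlt : n < 5^(m+1) := Nat.lt_pow_succ_log_self (by norm_num) n
  obtain ⟨B, hBcard, hB3, hBcount⟩ := iter hz (m - 1)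
  have hm1 : m - 1 + 1 = m := by omega
  rw [hm1] at hBcard hBcount
  obtain ⟨Q, hQsub, hQcard, hQ3⟩ := extendMany B hB3 (n - 5^m)
  have hQn : Q.card = n := by rw [hQcard, hBcard]; omega
  have hSP : (copT z B).card ≤ SPnm (tri a b c) n 3 := by
    calc (copT z B).card ≤ (copT z Q).card := copT_mono hQsub
      _ = SP (tri 0 1 z) Q := (SP_eq_copT z Q).symm
      _ = SP (tri a b c) Q := (SP_congr hsim Q).symm
      _ ≤ SPnm (tri a b c) n 3 := le_SPnm _ n Q hQn hQ3
  -- real arithmetic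
  set s : ℝ := ((copT z B).card : ℝ) with hsdef
  have hcount : (9:ℝ)^m ≤ s + 5^m := by
    have := hBcount
    have hcast : ((9^m : ℕ) : ℝ) ≤ (((copT z B).card + 5^m : ℕ) : ℝ) := Nat.cast_le.mpr this
    push_cast at hcast
    exact hcast
  have h25 : 2 * (5:ℝ)^m ≤ 9^m := by
    have := two_five_le_nine m hm2
    have hcast : ((2 * 5^m : ℕ) : ℝ) ≤ ((9^m : ℕ) : ℝ) := Nat.cast_le.mpr this
    push_cast at hcast
    exact hcast
  have hs2 : (9:ℝ)^m ≤ 2 * s := by linarith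
  have h5α : (5:ℝ) ^ α = 9 := by
    rw [Real.rpow_def_of_pos (by norm_num : (0:ℝ) < 5)]
    have hlog5 : Real.log 5 ≠ 0 := ne_of_gt (Real.log_pos (by norm_num))
    rw [hαdef, show Real.log 5 * (Real.log 9 / Real.log 5) = Real.log 9 by
      field_simp]
    exact Real.exp_log (by norm_num)
  have hkey : ((5:ℝ)^(m+1)) ^ α = 9^(m+1) := by
    rw [← Real.rpow_natCast (5:ℝ) (m+1), ← Real.rpow_mul (by norm_num : (0:ℝ) ≤ 5),
      mul_comm, Real.rpow_mul (by norm_num : (0:ℝ) ≤ 5), h5α, Real.rpow_natCast]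
  have hnα : (n:ℝ) ^ α ≤ 9^(m+1) := by
    rw [← hkey]
    apply Real.rpow_le_rpow (Nat.cast_nonneg n) _ hα0
    have : ((n:ℕ):ℝ) ≤ ((5^(m+1) : ℕ) : ℝ) := Nat.cast_le.mpr (le_of_lt hlt)
    push_cast at this
    exact this
  have h9m : (9:ℝ)^(m+1) = 9 * 9^m := by ring
  have hfin : (1/18) * (n:ℝ)^α ≤ s := by
    have h1 : (n:ℝ)^α ≤ 9 * 9^m := by rw [← h9m]; exact hnα
    have h2 : 9 * (9:ℝ)^m ≤ 18 * s := by linarith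
    linarith
  calc (1/18) * (n:ℝ)^α ≤ s := hfin
    _ ≤ (SPnm (tri a b c) n 3 : ℝ) := Nat.cast_le.mpr hSP
end
end

section
/- Let A and P be finite parallelogram-free sets of complex numbers. Then the set S of all pairs (u, v) ∈ ℂ² for which the set Q(P, A, u, v) := ⋃_{p ∈ P} {u·p + (v·p − p + 1)·a : a ∈ A} either has fewer than |A|·|P| points, or has three collinear points, or contains four pairwise distinct points p₁, p₂, p₃, p₄ with p₂ − p₁ = p₄ − p₃ (a parallelogram), has Lebesgue measure zero in ℂ². -/
open MeasureTheory

noncomputable section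

open Complex

instance pfzHaarCC : ((volume : Measure (ℂ × ℂ))).IsAddHaarMeasure := by
  rw [show (volume : Measure (ℂ × ℂ)) = (volume : Measure ℂ).prod volume from Measure.volume_eq_prod ℂ ℂ]
  infer_instance

/-- level set of a nonzero linear map is null -/
theorem pfz_null_linear {E F : Type*} [NormedAddCommGroup E] [NormedSpace ℝ E]
    [MeasurableSpace E] [BorelSpace E] [FiniteDimensional ℝ E]
    (μ : Measure E) [μ.IsAddHaarMeasure]
    [AddCommGroup F] [Module ℝ F] (f : E →ₗ[ℝ] F) (hf : f ≠ 0) (c : F) :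
    μ {x | f x = c} = 0 := by
  by_cases h : ∃ x₀, f x₀ = c
  · obtain ⟨x₀, hx₀⟩ := h
    have hset : {x | f x = c} = (fun x => -x₀ + x) ⁻¹' (LinearMap.ker f : Set E) := by
      ext x
      simp only [Set.mem_setOf_eq, Set.mem_preimage, SetLike.mem_coe, LinearMap.mem_ker,
        map_add, map_neg, hx₀]
      rw [neg_add_eq_zero, eq_comm]
    rw [hset, measure_preimage_add]
    exact Measure.addHaar_submodule μ _ (by simpa [LinearMap.ker_eq_top] using hf)
  · have : {x | f x = c} = ∅ := by
      ext x; simp only [Set.mem_setOf_eq, Set.mem_empty_iff_false, iff_false]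
      intro hx; exact h ⟨x, hx⟩
    simp [this]

/-- affine complex plane in ℂ² is null -/
theorem pfz_affine_null (α β γ : ℂ) (h : α ≠ 0 ∨ β ≠ 0) :
    volume {uv : ℂ × ℂ | α * uv.1 + β * uv.2 + γ = 0} = 0 := by
  let f : (ℂ × ℂ) →ₗ[ℝ] ℂ :=
    { toFun := fun x => α * x.1 + β * x.2
      map_add' := by intro x y; simp [Prod.fst_add, Prod.snd_add]; ring
      map_smul' := by intro r x; simp [Prod.smul_fst, Prod.smul_snd, Complex.real_smul]; ring }
  have hf : f ≠ 0 := by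
    rcases h with h | h
    · intro hf0
      have : f (1, 0) = 0 := by rw [hf0]; rfl
      simp [f] at this; exact h this
    · intro hf0
      have : f (0, 1) = 0 := by rw [hf0]; rfl
      simp [f] at this; exact h this
  have : {uv : ℂ × ℂ | α * uv.1 + β * uv.2 + γ = 0} = {x | f x = -γ} := by
    ext x
    simp only [Set.mem_setOf_eq, f, LinearMap.coe_mk, AddHom.coe_mk]
    constructor
    · intro hx; linear_combination hx
    · intro hx; linear_combination hx
  rw [this]
  exact pfz_null_linear volume f hf _

/-- a real line in ℂ is null -/
theorem pfz_line_null (e : ℂ) (he : e ≠ 0) (m : ℝ) :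
    volume {u : ℂ | (e * u).im + m = 0} = 0 := by
  let f : ℂ →ₗ[ℝ] ℝ :=
    { toFun := fun u => (e * u).im
      map_add' := by intro x y; simp [mul_add]
      map_smul' := by
        intro r x
        simp only [Complex.real_smul, RingHom.id_apply, smul_eq_mul]
        rw [show e * ((r:ℂ) * x) = (r:ℂ) * (e * x) by ring, Complex.im_ofReal_mul] }
  have hf : f ≠ 0 := by
    intro hf0
    have : f (Complex.I * (starRingEnd ℂ) e) = 0 := by rw [hf0]; rfl
    have h2 : (e * (Complex.I * (starRingEnd ℂ) e)).im = normSq e := by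
      rw [show e * (Complex.I * (starRingEnd ℂ) e) = Complex.I * (e * (starRingEnd ℂ) e) by ring,
        Complex.mul_conj]
      simp
    simp only [f, LinearMap.coe_mk, AddHom.coe_mk] at this
    rw [h2] at this
    exact (Complex.normSq_pos.2 he).ne' this
  have : {u : ℂ | (e * u).im + m = 0} = {x | f x = -m} := by
    ext x; simp only [Set.mem_setOf_eq, f, LinearMap.coe_mk, AddHom.coe_mk]
    constructor <;> intro hx <;> linarith
  rw [this]
  exact pfz_null_linear volume f hf _

/-- nondegenerate real quadratic level set (a circle) is null -/
theorem pfz_quad_null (K : ℝ) (hK : K ≠ 0) (δ : ℂ) (m : ℝ) :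
    volume {u : ℂ | K * normSq u + (δ * u).im + m = 0} = 0 := by
  set w : ℂ := ⟨(2*K)⁻¹ * δ.im, (2*K)⁻¹ * δ.re⟩ with hw
  set R : ℝ := normSq w - m / K with hR
  have hsub : {u : ℂ | K * normSq u + (δ * u).im + m = 0} ⊆ {u : ℂ | normSq (u + w) = R} := by
    intro u hu
    simp only [Set.mem_setOf_eq, normSq_apply, Complex.mul_im] at hu ⊢
    simp only [hR, hw, Complex.add_re, Complex.add_im, normSq_apply]
    field_simp
    ring_nf
    ring_nf at hu
    linear_combination (4*K) * hu
  refine measure_mono_null hsub ?_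
  by_cases hR0 : 0 ≤ R
  · refine measure_mono_null (fun u hu => ?_) (Measure.addHaar_sphere volume (-w) (Real.sqrt R))
    simp only [Set.mem_setOf_eq] at hu
    simp only [Metric.mem_sphere, Complex.dist_eq]
    rw [sub_neg_eq_add, ← hu, ← Complex.sq_norm, Real.sqrt_sq (norm_nonneg _)]
  · have : {u : ℂ | normSq (u + w) = R} = ∅ := by
      ext u; simp only [Set.mem_setOf_eq, Set.mem_empty_iff_false, iff_false]
      intro h; exact hR0 (h ▸ normSq_nonneg _)
    simp [this]

/-- circle-type collinearity set is null -/
theorem pfz_circle_null (c₂ c₃ d₂ d₃ : ℂ) (hK : (c₂ * (starRingEnd ℂ) c₃).im ≠ 0) :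
    volume {u : ℂ | ((c₂ * u + d₂) * (starRingEnd ℂ) (c₃ * u + d₃)).im = 0} = 0 := by
  have key : ∀ u : ℂ, ((c₂ * u + d₂) * (starRingEnd ℂ) (c₃ * u + d₃)).im
      = (c₂ * (starRingEnd ℂ) c₃).im * normSq u
        + ((c₂ * (starRingEnd ℂ) d₃ - (starRingEnd ℂ) d₂ * c₃) * u).im
        + (d₂ * (starRingEnd ℂ) d₃).im := by
    intro u
    simp only [normSq_apply, Complex.add_re, Complex.add_im, Complex.mul_re, Complex.mul_im,
      Complex.sub_re, Complex.sub_im, Complex.conj_re, Complex.conj_im]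
    ring
  have : {u : ℂ | ((c₂ * u + d₂) * (starRingEnd ℂ) (c₃ * u + d₃)).im = 0}
      = {u : ℂ | (c₂ * (starRingEnd ℂ) c₃).im * normSq u
          + ((c₂ * (starRingEnd ℂ) d₃ - (starRingEnd ℂ) d₂ * c₃) * u).im
          + (d₂ * (starRingEnd ℂ) d₃).im = 0} := by
    ext u; rw [Set.mem_setOf_eq, Set.mem_setOf_eq, key u]
  rw [this]
  exact pfz_quad_null _ hK _ _

/-- Fubini: if all `u`-slices (second coord fixed) are null, the set is null -/
theorem pfz_slice_null {s : Set (ℂ × ℂ)} (hs : MeasurableSet s)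
    (h : ∀ v : ℂ, volume {u : ℂ | (u, v) ∈ s} = 0) : volume s = 0 := by
  have hswap : MeasurableSet (Prod.swap ⁻¹' s) := measurable_swap hs
  have h1 : (volume : Measure (ℂ × ℂ)) s = (volume : Measure (ℂ × ℂ)) (Prod.swap ⁻¹' s) := by
    rw [Measure.volume_eq_prod]
    exact (Measure.measurePreserving_swap.measure_preimage hs.nullMeasurableSet).symm
  rw [h1, Measure.volume_eq_prod, Measure.measure_prod_null hswap]
  refine Filter.Eventually.of_forall (fun v => ?_)
  show volume (Prod.mk v ⁻¹' (Prod.swap ⁻¹' s)) = 0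
  have : (Prod.mk v ⁻¹' (Prod.swap ⁻¹' s)) = {u : ℂ | (u, v) ∈ s} := rfl
  rw [this]; exact h v

/-- vertical strip over a single point is null -/
theorem pfz_strip_null (p : ℂ) :
    volume {uv : ℂ × ℂ | p * uv.2 + 1 - p = 0} = 0 := by
  have : {uv : ℂ × ℂ | p * uv.2 + 1 - p = 0} = Set.univ ×ˢ {v : ℂ | p * v + 1 - p = 0} := by
    ext uv; simp [Set.mem_prod]
  rw [this, Measure.volume_eq_prod, Measure.prod_prod]
  have hN : volume {v : ℂ | p * v + 1 - p = 0} = 0 := by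
    by_cases hp : p = 0
    · have : {v : ℂ | p * v + 1 - p = 0} = ∅ := by
        ext v; simp [hp]
      simp [this]
    · have : {v : ℂ | p * v + 1 - p = 0} = {(p - 1) / p} := by
        ext v
        simp only [Set.mem_setOf_eq, Set.mem_singleton_iff]
        constructor
        · intro h; field_simp; linear_combination h
        · intro h; rw [h]; field_simp; ring
      rw [this]; exact measure_singleton _
  rw [hN, mul_zero]

/-- auxiliary: real dependence -/
theorem pfz_aux_real_dep (c w : ℂ) (hns : normSq c ≠ 0)
    (him' : w.im * c.re - w.re * c.im = 0) :
    w = (((w.re * c.re + w.im * c.im) / normSq c : ℝ) : ℂ) * c := by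
  apply Complex.ext
  · simp only [Complex.mul_re, Complex.ofReal_re, Complex.ofReal_im, normSq_apply]
    rw [normSq_apply] at hns
    have hns2 : c.re ^ 2 + c.im ^ 2 ≠ 0 := by simpa [sq] using hns
    have hns3 : c.im ^ 2 + c.re ^ 2 ≠ 0 := by rw [add_comm]; exact hns2
    field_simp
    linear_combination (-c.im) * him'
  · simp only [Complex.mul_im, Complex.ofReal_re, Complex.ofReal_im, normSq_apply]
    rw [normSq_apply] at hns
    have hns2 : c.re ^ 2 + c.im ^ 2 ≠ 0 := by simpa [sq] using hns
    have hns3 : c.im ^ 2 + c.re ^ 2 ≠ 0 := by rw [add_comm]; exact hns2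
    field_simp
    linear_combination (c.re) * him'

/-- if the "cross product" vanishes, three points are collinear -/
theorem pfz_collinear_of_im (x y z : ℂ) (h : ((y - x) * (starRingEnd ℂ) (z - x)).im = 0) :
    Collinear ℝ ({x, y, z} : Set ℂ) := by
  by_cases hxy : y = x
  · have : ({x, y, z} : Set ℂ) = {x, z} := by rw [hxy]; simp
    rw [this]; exact collinear_pair ℝ x z
  · set c := y - x with hc
    have hc0 : c ≠ 0 := sub_ne_zero.2 hxy
    have hns : normSq c ≠ 0 := (normSq_pos.2 hc0).ne'
    set w := z - x with hwdef
    have him : (w * (starRingEnd ℂ) c).im = 0 := by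
      rw [show w * (starRingEnd ℂ) c = (starRingEnd ℂ) (c * (starRingEnd ℂ) w) by
        rw [map_mul, Complex.conj_conj]; ring, Complex.conj_im, h, neg_zero]
    have him' : w.im * c.re - w.re * c.im = 0 := by
      have := him
      simp only [Complex.mul_im, Complex.conj_re, Complex.conj_im] at this
      linarith
    set r : ℝ := (w.re * c.re + w.im * c.im) / normSq c with hrdef
    have hwc : w = (r : ℂ) * c := pfz_aux_real_dep c w hns him'
    apply (collinear_iff_of_mem (Set.mem_insert x {y, z})).2
    refine ⟨c, fun p hp => ?_⟩
    rcases hp with rfl | rfl | rfl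
    · exact ⟨0, by simp⟩
    · exact ⟨1, by simp [Complex.real_smul, hc]⟩
    · refine ⟨r, ?_⟩
      rw [Complex.real_smul, ← hwc, vadd_eq_add, hwdef]
      ring

/-- collinear points have vanishing cross product -/
theorem pfz_im_of_collinear {s : Set ℂ} (h : Collinear ℝ s) {x y z : ℂ}
    (hx : x ∈ s) (hy : y ∈ s) (hz : z ∈ s) :
    ((y - x) * (starRingEnd ℂ) (z - x)).im = 0 := by
  obtain ⟨v, hv⟩ := (collinear_iff_of_mem hx).1 h
  obtain ⟨r₁, hr₁⟩ := hv y hy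
  obtain ⟨r₂, hr₂⟩ := hv z hz
  have h1 : y - x = (r₁ : ℂ) * v := by rw [hr₁, Complex.real_smul, vadd_eq_add]; ring
  have h2 : z - x = (r₂ : ℂ) * v := by rw [hr₂, Complex.real_smul, vadd_eq_add]; ring
  rw [h1, h2, map_mul, Complex.conj_ofReal,
    show (r₁ : ℂ) * v * ((r₂ : ℂ) * ((starRingEnd ℂ) v)) = ((r₁ : ℂ) * (r₂ : ℂ)) * (v * (starRingEnd ℂ) v) by ring,
    Complex.mul_conj]
  simp [← Complex.ofReal_mul]

/-- midpoint: x + y = 2 z implies collinearity of x z y -/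
theorem pfz_collinear_mid (x y z : ℂ) (h : x + y = 2 * z) :
    Collinear ℝ ({x, z, y} : Set ℂ) := by
  apply pfz_collinear_of_im
  have h1 : y - x = 2 * (z - x) := by linear_combination h
  rw [h1, map_mul, map_ofNat,
    show (z - x) * (2 * (starRingEnd ℂ) (z - x)) = 2 * ((z - x) * (starRingEnd ℂ) (z - x)) by ring,
    Complex.mul_conj]
  simp

/-- no 3 collinear points in a set with the line condition -/
theorem pfz_no3 {A : Finset ℂ} (hA : ∀ S ⊆ A, Collinear ℝ (S : Set ℂ) → S.card ≤ 2)
    {x y z : ℂ} (hx : x ∈ A) (hy : y ∈ A) (hz : z ∈ A)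
    (hxy : x ≠ y) (hxz : x ≠ z) (hyz : y ≠ z)
    (hcol : Collinear ℝ ({x, y, z} : Set ℂ)) : False := by
  classical
  have hsub : ({x, y, z} : Finset ℂ) ⊆ A := by
    intro w hw
    simp only [Finset.mem_insert, Finset.mem_singleton] at hw
    rcases hw with rfl | rfl | rfl <;> assumption
  have hcoe : (({x, y, z} : Finset ℂ) : Set ℂ) = ({x, y, z} : Set ℂ) := by simp
  have hcard : ({x, y, z} : Finset ℂ).card = 3 := by
    rw [Finset.card_insert_of_notMem (by simp [hxy, hxz]),
      Finset.card_insert_of_notMem (by simp [hyz]), Finset.card_singleton]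
  have := hA _ hsub (by rw [hcoe]; exact hcol)
  omega

/-- key sum structure lemma for parallelogram-free sets -/
theorem pfz_sumfree {A : Finset ℂ} (hA : ParallelogramFree A) {a₁ a₂ a₃ a₄ : ℂ}
    (h1 : a₁ ∈ A) (h2 : a₂ ∈ A) (h3 : a₃ ∈ A) (h4 : a₄ ∈ A)
    (h : a₁ + a₄ = a₂ + a₃) :
    (a₁ = a₂ ∧ a₃ = a₄) ∨ (a₁ = a₃ ∧ a₂ = a₄) := by
  by_cases h12 : a₁ = a₂
  · exact Or.inl ⟨h12, by linear_combination h12 - h⟩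
  by_cases h13 : a₁ = a₃
  · exact Or.inr ⟨h13, by linear_combination h13 - h⟩
  exfalso
  by_cases h23 : a₂ = a₃
  · have hmid : a₁ + a₄ = 2 * a₂ := by rw [h23] at h ⊢; linear_combination h
    have h14 : a₁ ≠ a₄ := fun he => h12 (by linear_combination hmid / 2 + he / 2)
    have h24 : a₂ ≠ a₄ := fun he => h13 (by linear_combination h + he)
    exact pfz_no3 hA.1 h1 h2 h4 h12 h14 h24 (pfz_collinear_mid a₁ a₄ a₂ hmid)
  · have h24 : a₂ ≠ a₄ := fun he => h13 (by linear_combination h + he)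
    have h34 : a₃ ≠ a₄ := fun he => h12 (by linear_combination h + he)
    have h14 : a₁ ≠ a₄ := by
      intro he
      have hmid : a₂ + a₃ = 2 * a₁ := by linear_combination -h - he
      exact pfz_no3 hA.1 h2 h1 h3 (fun hq => h12 hq.symm) h23 h13 (pfz_collinear_mid a₂ a₃ a₁ hmid)
    exact hA.2 ⟨a₁, h1, a₂, h2, a₃, h3, a₄, h4, h12, h13, h14, h23, h24, h34, by linear_combination -h⟩

/-- the point of the pattern indexed by `i = (p, a)` -/
def pfzPhi (i : ℂ × ℂ) (uv : ℂ × ℂ) : ℂ :=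
  i.1 * uv.1 + i.1 * i.2 * uv.2 + i.2 * (1 - i.1)

theorem pfzPhi_continuous (i : ℂ × ℂ) : Continuous (pfzPhi i) := by
  unfold pfzPhi; fun_prop

/-- The "circle" collinearity set for three indices whose `p`s give a nonzero cross. -/
theorem pfz_caseB_null (i j k : ℂ × ℂ)
    (hK : ((j.1 - i.1) * (starRingEnd ℂ) (k.1 - i.1)).im ≠ 0) :
    volume {uv : ℂ × ℂ |
      ((pfzPhi j uv - pfzPhi i uv) * (starRingEnd ℂ) (pfzPhi k uv - pfzPhi i uv)).im = 0} = 0 := by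
  apply pfz_slice_null
  · apply IsClosed.measurableSet
    apply isClosed_eq _ continuous_const
    have := pfzPhi_continuous i
    have := pfzPhi_continuous j
    have := pfzPhi_continuous k
    fun_prop
  · intro v
    have hset : {u : ℂ | (u, v) ∈ {uv : ℂ × ℂ |
        ((pfzPhi j uv - pfzPhi i uv) * (starRingEnd ℂ) (pfzPhi k uv - pfzPhi i uv)).im = 0}}
        = {u : ℂ | (((j.1 - i.1) * u + (j.1 * j.2 * v + j.2 * (1 - j.1) - i.1 * i.2 * v - i.2 * (1 - i.1)))
            * (starRingEnd ℂ) ((k.1 - i.1) * u + (k.1 * k.2 * v + k.2 * (1 - k.1) - i.1 * i.2 * v - i.2 * (1 - i.1)))).im = 0} := by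
      ext u
      have e1 : pfzPhi j (u, v) - pfzPhi i (u, v)
          = (j.1 - i.1) * u + (j.1 * j.2 * v + j.2 * (1 - j.1) - i.1 * i.2 * v - i.2 * (1 - i.1)) := by
        unfold pfzPhi; ring
      have e2 : pfzPhi k (u, v) - pfzPhi i (u, v)
          = (k.1 - i.1) * u + (k.1 * k.2 * v + k.2 * (1 - k.1) - i.1 * i.2 * v - i.2 * (1 - i.1)) := by
        unfold pfzPhi; ring
      simp only [Set.mem_setOf_eq, e1, e2]
    rw [hset]
    exact pfz_circle_null _ _ _ _ hK

/-- pair-share case -/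
theorem pfz_pair_null (p a b q c : ℂ) (hpq : q ≠ p) :
    volume {uv : ℂ × ℂ | pfzPhi (p, a) uv ≠ pfzPhi (p, b) uv ∧
      ((pfzPhi (q, c) uv - pfzPhi (p, a) uv)
        * (starRingEnd ℂ) (pfzPhi (p, b) uv - pfzPhi (p, a) uv)).im = 0} = 0 := by
  by_cases hab : a = b
  · have : {uv : ℂ × ℂ | pfzPhi (p, a) uv ≠ pfzPhi (p, b) uv ∧
      ((pfzPhi (q, c) uv - pfzPhi (p, a) uv)
        * (starRingEnd ℂ) (pfzPhi (p, b) uv - pfzPhi (p, a) uv)).im = 0} = ∅ := by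
      ext uv; simp [hab]
    rw [this]; simp
  · have hsub : {uv : ℂ × ℂ | pfzPhi (p, a) uv ≠ pfzPhi (p, b) uv ∧
      ((pfzPhi (q, c) uv - pfzPhi (p, a) uv)
        * (starRingEnd ℂ) (pfzPhi (p, b) uv - pfzPhi (p, a) uv)).im = 0}
        ⊆ {uv : ℂ × ℂ | p * uv.2 + 1 - p = 0} ∪
        {uv : ℂ × ℂ | p * uv.2 + 1 - p ≠ 0 ∧
          ((pfzPhi (q, c) uv - pfzPhi (p, a) uv)
            * (starRingEnd ℂ) (pfzPhi (p, b) uv - pfzPhi (p, a) uv)).im = 0} := by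
      rintro uv ⟨hne, him⟩
      by_cases ht : p * uv.2 + 1 - p = 0
      · exact Or.inl ht
      · exact Or.inr ⟨ht, him⟩
    refine measure_mono_null hsub (measure_union_null (pfz_strip_null p) ?_)
    apply pfz_slice_null
    · apply MeasurableSet.inter
      · exact (isClosed_eq (by fun_prop) continuous_const).isOpen_compl.measurableSet
      · apply IsClosed.measurableSet
        apply isClosed_eq _ continuous_const
        have := pfzPhi_continuous (p, a)
        have := pfzPhi_continuous (p, b)
        have := pfzPhi_continuous (q, c)
        fun_prop
    · intro v
      by_cases ht : p * v + 1 - p = 0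
      · have : {u : ℂ | (u, v) ∈ {uv : ℂ × ℂ | p * uv.2 + 1 - p ≠ 0 ∧
            ((pfzPhi (q, c) uv - pfzPhi (p, a) uv)
              * (starRingEnd ℂ) (pfzPhi (p, b) uv - pfzPhi (p, a) uv)).im = 0}} = ∅ := by
          ext u; simp only [Set.mem_setOf_eq, Set.mem_empty_iff_false, iff_false, not_and]
          intro h; exact absurd ht h
        rw [this]; simp
      · set W : ℂ := (p * v + 1 - p) * (b - a) with hW
        have hWne : W ≠ 0 := mul_ne_zero ht (sub_ne_zero.2 (Ne.symm hab))
        have he : (q - p) * (starRingEnd ℂ) W ≠ 0 :=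
          mul_ne_zero (sub_ne_zero.2 hpq) ((map_ne_zero _).2 hWne)
        refine measure_mono_null (?_ : _ ⊆
          {u : ℂ | (((q - p) * (starRingEnd ℂ) W) * u).im
            + ((q * c * v + c * (1 - q) - p * a * v - a * (1 - p)) * (starRingEnd ℂ) W).im = 0})
          (pfz_line_null _ he _)
        intro u hu
        obtain ⟨-, him⟩ := hu
        have h1 : pfzPhi (p, b) (u, v) - pfzPhi (p, a) (u, v) = W := by
          unfold pfzPhi; rw [hW]; ring
        have h2 : pfzPhi (q, c) (u, v) - pfzPhi (p, a) (u, v)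
            = (q - p) * u + (q * c * v + c * (1 - q) - p * a * v - a * (1 - p)) := by
          unfold pfzPhi; ring
        rw [h1, h2] at him
        simp only [Set.mem_setOf_eq]
        rw [← him, add_mul, Complex.add_im, mul_assoc,
          show (q - p) * ((starRingEnd ℂ) W * u) = (q - p) * u * (starRingEnd ℂ) W by ring]

/-- coincidence set for distinct indices is null -/
theorem pfz_coincide_null (i j : ℂ × ℂ) :
    volume {uv : ℂ × ℂ | i ≠ j ∧ pfzPhi i uv = pfzPhi j uv} = 0 := by
  by_cases hij : i = j
  · have : {uv : ℂ × ℂ | i ≠ j ∧ pfzPhi i uv = pfzPhi j uv} = ∅ := by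
      ext uv; simp [hij]
    rw [this]; simp
  · set α := i.1 - j.1 with hα
    set β := i.1 * i.2 - j.1 * j.2 with hβ
    set γ := i.2 * (1 - i.1) - j.2 * (1 - j.1) with hγ
    have hsub : {uv : ℂ × ℂ | i ≠ j ∧ pfzPhi i uv = pfzPhi j uv}
        ⊆ {uv : ℂ × ℂ | α * uv.1 + β * uv.2 + γ = 0} := by
      rintro uv ⟨-, heq⟩
      simp only [Set.mem_setOf_eq, hα, hβ, hγ]
      unfold pfzPhi at heq
      linear_combination heq
    by_cases hd : α ≠ 0 ∨ β ≠ 0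
    · exact measure_mono_null hsub (pfz_affine_null α β γ hd)
    · push_neg at hd
      obtain ⟨h1, h2⟩ := hd
      have hempty : {uv : ℂ × ℂ | i ≠ j ∧ pfzPhi i uv = pfzPhi j uv} = ∅ := by
        ext uv
        simp only [Set.mem_setOf_eq, Set.mem_empty_iff_false, iff_false, not_and]
        intro _ heq
        have hγ0 : γ = 0 := by
          have := hsub (by exact ⟨hij, heq⟩ : uv ∈ _)
          simp only [Set.mem_setOf_eq, h1, h2, zero_mul, zero_add] at this
          exact this
        apply hij
        have hp : i.1 = j.1 := by rw [hα] at h1; linear_combination h1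
        have ha : i.2 = j.2 := by
          rw [hβ] at h2; rw [hγ] at hγ0; linear_combination hγ0 + h2
        exact Prod.ext hp ha
      rw [hempty]; simp

/-- quadruple (parallelogram) set is null -/
theorem pfz_quadset_null {A P : Finset ℂ} (hA : ParallelogramFree A) (hP : ParallelogramFree P)
    {i j k l : ℂ × ℂ} (hi : i ∈ P ×ˢ A) (hj : j ∈ P ×ˢ A) (hk : k ∈ P ×ˢ A) (hl : l ∈ P ×ˢ A) :
    volume {uv : ℂ × ℂ |
      (pfzPhi i uv ≠ pfzPhi j uv ∧ pfzPhi i uv ≠ pfzPhi k uv ∧ pfzPhi i uv ≠ pfzPhi l uv ∧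
       pfzPhi j uv ≠ pfzPhi k uv ∧ pfzPhi j uv ≠ pfzPhi l uv ∧ pfzPhi k uv ≠ pfzPhi l uv) ∧
      pfzPhi j uv - pfzPhi i uv = pfzPhi l uv - pfzPhi k uv} = 0 := by
  simp only [Finset.mem_product] at hi hj hk hl
  set α := j.1 - i.1 - l.1 + k.1 with hα
  set β := j.1 * j.2 - i.1 * i.2 - l.1 * l.2 + k.1 * k.2 with hβ
  set γ := j.2 * (1 - j.1) - i.2 * (1 - i.1) - l.2 * (1 - l.1) + k.2 * (1 - k.1) with hγ
  have hsub : {uv : ℂ × ℂ |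
      (pfzPhi i uv ≠ pfzPhi j uv ∧ pfzPhi i uv ≠ pfzPhi k uv ∧ pfzPhi i uv ≠ pfzPhi l uv ∧
       pfzPhi j uv ≠ pfzPhi k uv ∧ pfzPhi j uv ≠ pfzPhi l uv ∧ pfzPhi k uv ≠ pfzPhi l uv) ∧
      pfzPhi j uv - pfzPhi i uv = pfzPhi l uv - pfzPhi k uv}
      ⊆ {uv : ℂ × ℂ | α * uv.1 + β * uv.2 + γ = 0} := by
    rintro uv ⟨-, heq⟩
    simp only [Set.mem_setOf_eq, hα, hβ, hγ]
    unfold pfzPhi at heq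
    linear_combination heq
  by_cases hd : α ≠ 0 ∨ β ≠ 0
  · exact measure_mono_null hsub (pfz_affine_null α β γ hd)
  push_neg at hd
  obtain ⟨hα0, hβ0⟩ := hd
  by_cases hγ0 : γ ≠ 0
  · -- set is empty since the equation forces γ = 0
    have hempty : {uv : ℂ × ℂ |
        (pfzPhi i uv ≠ pfzPhi j uv ∧ pfzPhi i uv ≠ pfzPhi k uv ∧ pfzPhi i uv ≠ pfzPhi l uv ∧
         pfzPhi j uv ≠ pfzPhi k uv ∧ pfzPhi j uv ≠ pfzPhi l uv ∧ pfzPhi k uv ≠ pfzPhi l uv) ∧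
        pfzPhi j uv - pfzPhi i uv = pfzPhi l uv - pfzPhi k uv} = ∅ := by
      ext uv
      simp only [Set.mem_setOf_eq, Set.mem_empty_iff_false, iff_false, not_and]
      intro hne heq
      have := hsub ⟨hne, heq⟩
      simp only [Set.mem_setOf_eq, hα0, hβ0, zero_mul, zero_add] at this
      exact hγ0 this
    rw [hempty]; simp
  · -- combinatorially impossible: set is empty since indices must be distinct
    push_neg at hγ0
    have hempty : {uv : ℂ × ℂ |
        (pfzPhi i uv ≠ pfzPhi j uv ∧ pfzPhi i uv ≠ pfzPhi k uv ∧ pfzPhi i uv ≠ pfzPhi l uv ∧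
         pfzPhi j uv ≠ pfzPhi k uv ∧ pfzPhi j uv ≠ pfzPhi l uv ∧ pfzPhi k uv ≠ pfzPhi l uv) ∧
        pfzPhi j uv - pfzPhi i uv = pfzPhi l uv - pfzPhi k uv} = ∅ := by
      ext uv
      simp only [Set.mem_setOf_eq, Set.mem_empty_iff_false, iff_false, not_and]
      rintro ⟨hij, hik, hil, hjk, hjl, hkl⟩ heq
      have dij : i ≠ j := fun h => hij (by rw [h])
      have dik : i ≠ k := fun h => hik (by rw [h])
      have dil : i ≠ l := fun h => hil (by rw [h])
      have djk : j ≠ k := fun h => hjk (by rw [h])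
      have djl : j ≠ l := fun h => hjl (by rw [h])
      have dkl : k ≠ l := fun h => hkl (by rw [h])
      -- p-sum and a-sum identities
      have hpsum : i.1 + l.1 = j.1 + k.1 := by rw [hα] at hα0; linear_combination -hα0
      have hasum : i.2 + l.2 = j.2 + k.2 := by
        rw [hγ] at hγ0; rw [hβ] at hβ0; linear_combination -hγ0 - hβ0
      have hβ' : i.1 * i.2 + l.1 * l.2 = j.1 * j.2 + k.1 * k.2 := by
        rw [hβ] at hβ0; linear_combination -hβ0
      rcases pfz_sumfree hP hi.1 hj.1 hk.1 hl.1 hpsum with ⟨e1, e2⟩ | ⟨e1, e2⟩ <;>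
        rcases pfz_sumfree hA hi.2 hj.2 hk.2 hl.2 hasum with ⟨f1, f2⟩ | ⟨f1, f2⟩
      · exact dij (Prod.ext e1 f1)
      · -- p: i1=j1, k1=l1 ; a: i2=k2, j2=l2
        have hz : (i.1 - k.1) * (i.2 - j.2) = 0 := by
          have hb2 := hβ'
          rw [← e1, ← e2, ← f1, ← f2] at hb2
          linear_combination hb2
        rcases mul_eq_zero.1 hz with h | h
        · exact dik (Prod.ext (by linear_combination h) f1)
        · exact dij (Prod.ext e1 (by linear_combination h))
      · -- p: i1=k1, j1=l1 ; a: i2=j2, k2=l2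
        have hz : (i.1 - j.1) * (i.2 - k.2) = 0 := by
          have hb2 := hβ'
          rw [← e1, ← e2, ← f1, ← f2] at hb2
          linear_combination hb2
        rcases mul_eq_zero.1 hz with h | h
        · exact dij (Prod.ext (by linear_combination h) f1)
        · exact dik (Prod.ext e1 (by linear_combination h))
      · exact dik (Prod.ext e1 f1)
    rw [hempty]; simp

/-- same-p difference formula -/
theorem pfzPhi_same_p (p a b : ℂ) (uv : ℂ × ℂ) :
    pfzPhi (p, b) uv - pfzPhi (p, a) uv = (b - a) * (p * uv.2 + 1 - p) := by
  unfold pfzPhi; ring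

theorem pfz_scaled_im (x y t : ℂ) :
    (x * t * (starRingEnd ℂ) (y * t)).im = normSq t * (x * (starRingEnd ℂ) y).im := by
  rw [map_mul, show x * t * ((starRingEnd ℂ) y * (starRingEnd ℂ) t)
      = (t * (starRingEnd ℂ) t) * (x * (starRingEnd ℂ) y) by ring, Complex.mul_conj,
    im_ofReal_mul]

theorem pfz_triple_null {A P : Finset ℂ} (hA : ParallelogramFree A) (hP : ParallelogramFree P)
    {i j k : ℂ × ℂ} (hi : i ∈ P ×ˢ A) (hj : j ∈ P ×ˢ A) (hk : k ∈ P ×ˢ A) :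
    volume {uv : ℂ × ℂ | pfzPhi i uv ≠ pfzPhi j uv ∧ pfzPhi i uv ≠ pfzPhi k uv ∧
      pfzPhi j uv ≠ pfzPhi k uv ∧
      Collinear ℝ ({pfzPhi i uv, pfzPhi j uv, pfzPhi k uv} : Set ℂ)} = 0 := by
  simp only [Finset.mem_product] at hi hj hk
  by_cases hp12 : i.1 = j.1
  · by_cases hp13 : i.1 = k.1
    · -- all three p equal: empty
      have hempty : {uv : ℂ × ℂ | pfzPhi i uv ≠ pfzPhi j uv ∧ pfzPhi i uv ≠ pfzPhi k uv ∧
          pfzPhi j uv ≠ pfzPhi k uv ∧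
          Collinear ℝ ({pfzPhi i uv, pfzPhi j uv, pfzPhi k uv} : Set ℂ)} = ∅ := by
        ext uv
        simp only [Set.mem_setOf_eq, Set.mem_empty_iff_false, iff_false, not_and]
        intro hij hik hjk hcol
        set t : ℂ := i.1 * uv.2 + 1 - i.1 with ht
        have d1 : pfzPhi j uv - pfzPhi i uv = (j.2 - i.2) * t := by
          rw [← Prod.mk.eta (p := j), ← hp12, pfzPhi_same_p]
        have d2 : pfzPhi k uv - pfzPhi i uv = (k.2 - i.2) * t := by
          rw [← Prod.mk.eta (p := k), ← hp13, pfzPhi_same_p]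
        have d3 : pfzPhi k uv - pfzPhi j uv = (k.2 - j.2) * t := by
          linear_combination d2 - d1
        have htne : t ≠ 0 := by
          intro h0
          have e := d1; rw [h0, mul_zero] at e
          exact hij (sub_eq_zero.1 e).symm
        have ha12 : i.2 ≠ j.2 := by
          intro h0
          have e := d1; rw [h0, sub_self, zero_mul] at e
          exact hij (sub_eq_zero.1 e).symm
        have ha13 : i.2 ≠ k.2 := by
          intro h0
          have e := d2; rw [h0, sub_self, zero_mul] at e
          exact hik (sub_eq_zero.1 e).symm
        have ha23 : j.2 ≠ k.2 := by
          intro h0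
          have e := d3; rw [h0, sub_self, zero_mul] at e
          exact hjk (sub_eq_zero.1 e).symm
        have him := pfz_im_of_collinear hcol (show pfzPhi i uv ∈ _ by simp)
          (show pfzPhi j uv ∈ _ by simp) (show pfzPhi k uv ∈ _ by simp)
        rw [show pfzPhi j uv - pfzPhi i uv = (j.2 - i.2) * t from d1,
          show pfzPhi k uv - pfzPhi i uv = (k.2 - i.2) * t from d2, pfz_scaled_im] at him
        have him' : ((j.2 - i.2) * (starRingEnd ℂ) (k.2 - i.2)).im = 0 :=
          (mul_eq_zero.1 him).resolve_left (fun h => htne (normSq_eq_zero.1 h))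
        exact pfz_no3 hA.1 hi.2 hj.2 hk.2 ha12 ha13 ha23
          (pfz_collinear_of_im i.2 j.2 k.2 him')
      rw [hempty]; simp
    · -- pair (i, j) share p, third k
      have hpq : k.1 ≠ i.1 := fun h => hp13 h.symm
      have hnull := pfz_pair_null i.1 i.2 j.2 k.1 k.2 hpq
      rw [show ((i.1 : ℂ), i.2) = i from rfl, show ((k.1 : ℂ), k.2) = k from rfl,
        show ((i.1 : ℂ), j.2) = j by rw [hp12]] at hnull
      refine measure_mono_null ?_ hnull
      rintro uv ⟨hij, hik, hjk, hcol⟩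
      refine ⟨hij, ?_⟩
      exact pfz_im_of_collinear hcol (by simp) (by simp) (by simp)
  · by_cases hp13 : i.1 = k.1
    · -- pair (i, k) share p, third j
      have hpq : j.1 ≠ i.1 := fun h => hp12 h.symm
      have hnull := pfz_pair_null i.1 i.2 k.2 j.1 j.2 hpq
      rw [show ((i.1 : ℂ), i.2) = i from rfl, show ((j.1 : ℂ), j.2) = j from rfl,
        show ((i.1 : ℂ), k.2) = k by rw [hp13]] at hnull
      refine measure_mono_null ?_ hnull
      rintro uv ⟨hij, hik, hjk, hcol⟩
      refine ⟨hik, ?_⟩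
      exact pfz_im_of_collinear hcol (by simp) (by simp) (by simp)
    · by_cases hp23 : j.1 = k.1
      · -- pair (j, k) share p, third i
        have hpq : i.1 ≠ j.1 := hp12
        have hnull := pfz_pair_null j.1 j.2 k.2 i.1 i.2 hpq
        rw [show ((j.1 : ℂ), j.2) = j from rfl, show ((i.1 : ℂ), i.2) = i from rfl,
          show ((j.1 : ℂ), k.2) = k by rw [hp23]] at hnull
        refine measure_mono_null ?_ hnull
        rintro uv ⟨hij, hik, hjk, hcol⟩
        refine ⟨hjk, ?_⟩
        exact pfz_im_of_collinear hcol (by simp) (by simp) (by simp)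
      · -- all p distinct: circle case
        have hK : ((j.1 - i.1) * (starRingEnd ℂ) (k.1 - i.1)).im ≠ 0 := by
          intro h0
          exact pfz_no3 hP.1 hi.1 hj.1 hk.1 hp12 hp13 hp23
            (pfz_collinear_of_im i.1 j.1 k.1 h0)
        refine measure_mono_null ?_ (pfz_caseB_null i j k hK)
        rintro uv ⟨hij, hik, hjk, hcol⟩
        exact pfz_im_of_collinear hcol (by simp) (by simp) (by simp)

/-- If `A` and `P` are parallelogram-free, then the set of pairs `(u, v) ∈ ℂ²` for
which `Q(P, A, u, v)` has fewer than `|A|·|P|` points, or three collinear points, or a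
parallelogram, has Lebesgue measure zero. -/
theorem stmt13 (A P : Finset ℂ) (hA : ParallelogramFree A) (hP : ParallelogramFree P) :
    volume {uv : ℂ × ℂ |
      (Qset P A uv.1 uv.2).card < A.card * P.card ∨
      (∃ S ⊆ Qset P A uv.1 uv.2, S.card = 3 ∧ Collinear ℝ (S : Set ℂ)) ∨
      HasParallelogram (Qset P A uv.1 uv.2)} = 0 := by
  classical
  have hQim : ∀ uv : ℂ × ℂ, Qset P A uv.1 uv.2 = (P ×ˢ A).image (fun i => pfzPhi i uv) := by
    intro uv
    ext q
    unfold Qset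
    simp only [Finset.mem_biUnion, Finset.mem_image, Finset.mem_product, pfzPhi]
    constructor
    · rintro ⟨p, hp, a, ha, rfl⟩
      exact ⟨(p, a), ⟨hp, ha⟩, by ring⟩
    · rintro ⟨⟨p, a⟩, ⟨hp, ha⟩, rfl⟩
      exact ⟨p, hp, a, ha, by ring⟩
  set S : Set (ℂ × ℂ) := ((P ×ˢ A : Finset (ℂ × ℂ)) : Set (ℂ × ℂ)) with hS
  have hScnt : S.Countable := (P ×ˢ A).countable_toSet
  refine measure_mono_null (?_ : _ ⊆
      (⋃ i ∈ S, ⋃ j ∈ S, {uv : ℂ × ℂ | i ≠ j ∧ pfzPhi i uv = pfzPhi j uv}) ∪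
      ((⋃ i ∈ S, ⋃ j ∈ S, ⋃ k ∈ S,
        {uv : ℂ × ℂ | pfzPhi i uv ≠ pfzPhi j uv ∧ pfzPhi i uv ≠ pfzPhi k uv ∧
          pfzPhi j uv ≠ pfzPhi k uv ∧
          Collinear ℝ ({pfzPhi i uv, pfzPhi j uv, pfzPhi k uv} : Set ℂ)}) ∪
       (⋃ i ∈ S, ⋃ j ∈ S, ⋃ k ∈ S, ⋃ l ∈ S,
        {uv : ℂ × ℂ |
          (pfzPhi i uv ≠ pfzPhi j uv ∧ pfzPhi i uv ≠ pfzPhi k uv ∧ pfzPhi i uv ≠ pfzPhi l uv ∧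
           pfzPhi j uv ≠ pfzPhi k uv ∧ pfzPhi j uv ≠ pfzPhi l uv ∧ pfzPhi k uv ≠ pfzPhi l uv) ∧
          pfzPhi j uv - pfzPhi i uv = pfzPhi l uv - pfzPhi k uv}))) ?_
  · intro uv hbad
    simp only [Set.mem_setOf_eq] at hbad
    rcases hbad with h1 | h2 | h3
    · -- cardinality drop: non-injectivity
      left
      rw [hQim uv] at h1
      have hninj : ¬ Set.InjOn (fun i => pfzPhi i uv) S := by
        intro hinj
        rw [Finset.card_image_of_injOn hinj, Finset.card_product, Nat.mul_comm] at h1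
        exact lt_irrefl _ h1
      rw [Set.InjOn] at hninj
      push_neg at hninj
      obtain ⟨x, hx, y, hy, hfeq, hne⟩ := hninj
      simp only [Set.mem_iUnion]
      exact ⟨x, hx, y, hy, hne, hfeq⟩
    · -- three collinear points
      right; left
      obtain ⟨T, hTsub, hT3, hTcol⟩ := h2
      rw [Finset.card_eq_three] at hT3
      obtain ⟨x, y, z, hxy, hxz, hyz, rfl⟩ := hT3
      have hcoe : ((({x, y, z} : Finset ℂ)) : Set ℂ) = ({x, y, z} : Set ℂ) := by simp
      rw [hcoe] at hTcol
      have hxQ : x ∈ Qset P A uv.1 uv.2 := hTsub (by simp)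
      have hyQ : y ∈ Qset P A uv.1 uv.2 := hTsub (by simp)
      have hzQ : z ∈ Qset P A uv.1 uv.2 := hTsub (by simp)
      rw [hQim uv, Finset.mem_image] at hxQ hyQ hzQ
      obtain ⟨i, hi, hix⟩ := hxQ
      obtain ⟨j, hj, hjy⟩ := hyQ
      obtain ⟨k, hk, hkz⟩ := hzQ
      simp only [Set.mem_iUnion]
      refine ⟨i, hi, j, hj, k, hk, ?_⟩
      simp only [Set.mem_setOf_eq, hix, hjy, hkz]
      exact ⟨hxy, hxz, hyz, hTcol⟩
    · -- parallelogram
      right; right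
      obtain ⟨q₁, hq₁, q₂, hq₂, q₃, hq₃, q₄, hq₄, h12, h13, h14, h23, h24, h34, heq⟩ := h3
      rw [hQim uv, Finset.mem_image] at hq₁ hq₂ hq₃ hq₄
      obtain ⟨i, hi, hi1⟩ := hq₁
      obtain ⟨j, hj, hj2⟩ := hq₂
      obtain ⟨k, hk, hk3⟩ := hq₃
      obtain ⟨l, hl, hl4⟩ := hq₄
      simp only [Set.mem_iUnion]
      refine ⟨i, hi, j, hj, k, hk, l, hl, ?_⟩
      simp only [Set.mem_setOf_eq, hi1, hj2, hk3, hl4]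
      exact ⟨⟨h12, h13, h14, h23, h24, h34⟩, by linear_combination heq⟩
  · refine measure_union_null ?_ (measure_union_null ?_ ?_)
    · rw [measure_biUnion_null_iff hScnt]
      intro i _
      rw [measure_biUnion_null_iff hScnt]
      intro j _
      exact pfz_coincide_null i j
    · rw [measure_biUnion_null_iff hScnt]
      intro i hi
      rw [measure_biUnion_null_iff hScnt]
      intro j hj
      rw [measure_biUnion_null_iff hScnt]
      intro k hk
      exact pfz_triple_null hA hP (Finset.mem_coe.1 hi) (Finset.mem_coe.1 hj) (Finset.mem_coe.1 hk)
    · rw [measure_biUnion_null_iff hScnt]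
      intro i hi
      rw [measure_biUnion_null_iff hScnt]
      intro j hj
      rw [measure_biUnion_null_iff hScnt]
      intro k hk
      rw [measure_biUnion_null_iff hScnt]
      intro l hl
      exact pfz_quadset_null hA hP (Finset.mem_coe.1 hi) (Finset.mem_coe.1 hj)
        (Finset.mem_coe.1 hk) (Finset.mem_coe.1 hl)
end
end
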